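/- arXiv:2006.09321 — 9 statements merged into one kernel-verified Lean document; each statement's English description precedes it below -/
import Mathlib

section
/- Let x, y be permutations of [n] with x ⊵_R y, and let m = ℓ(x) − ℓ(y). Then there exist permutations x_0 = y, x_1, …, x_m = x such that x_k ⊵_R x_{k−1} and ℓ(x_k) = ℓ(y) + k for all k ∈ [m]. -/
/-- `o` is the outcome of running parking Algorithm A on preference vector `a`:
car `i` parks in the first unoccupied spot in `[a i, n]`, and every car parks. -/
def IsAOutcome {n : ℕ} (a o : Fin n → Fin n) : Prop :=
  Function.Injective o ∧ ∀ i, a i ≤ o i ∧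
    ∀ s, a i ≤ s → s < o i → ∃ j, j < i ∧ o j = s

/-- `a` is a parking function. -/
def IsParkingFunction {n : ℕ} (a : Fin n → Fin n) : Prop :=
  ∃ o, IsAOutcome a o

/-- `o` is the outcome of running parking Algorithm B on the pair `(a, b)`:
car `i` parks in the first unoccupied spot in `[a i, b i]`, and every car parks. -/
def IsBOutcome {n : ℕ} (a b o : Fin n → Fin n) : Prop :=
  Function.Injective o ∧ ∀ i, a i ≤ o i ∧ o i ≤ b i ∧
    ∀ s, a i ≤ s → s < o i → ∃ j, j < i ∧ o j = s

/-- `(a, b)` is an interval parking function. -/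
def IsIPF {n : ℕ} (a b : Fin n → Fin n) : Prop :=
  ∃ o, IsBOutcome a b o

/-- The conjugate (reverse complement) `x*` of `x`, with `x*(i) = n + 1 - x(n + 1 - i)`. -/
def pconj {n : ℕ} (f : Fin n → Fin n) : Fin n → Fin n :=
  fun i => (f i.rev).rev

/-- The pair `(x, y)` is reachable, `x ⊵_R y`: there is an IPF `(a, b)` with
`O(a) = x` and `O(b*) = y*`. -/
def Reaches {n : ℕ} (x y : Fin n → Fin n) : Prop :=
  ∃ a b : Fin n → Fin n, IsIPF a b ∧ IsAOutcome a x ∧ IsAOutcome (pconj b) (pconj y)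

/-- Pseudoreachability `x ≥_P y`: the reflexive-transitive closure of reachability. -/
def PseudoGE {n : ℕ} (x y : Equiv.Perm (Fin n)) : Prop :=
  Relation.ReflTransGen (fun u v : Equiv.Perm (Fin n) => Reaches ⇑u ⇑v) x y

/-- `#{k ∈ [i] : x(k) ≥ j}` (with `i`, `j` zero-indexed). -/
def bcount {n : ℕ} (x : Fin n → Fin n) (i j : Fin n) : ℕ :=
  (Finset.univ.filter (fun k : Fin n => k ≤ i ∧ j ≤ x k)).card

/-- The Bruhat order `x ≥_B y` on the symmetric group. -/
def BruhatGE {n : ℕ} (x y : Equiv.Perm (Fin n)) : Prop :=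
  ∀ i j : Fin n, bcount ⇑y i j ≤ bcount ⇑x i j

/-- The number of inversions (the Coxeter length) of `f`. -/
def invCount {n : ℕ} (f : Fin n → Fin n) : ℕ :=
  (Finset.univ.filter (fun p : Fin n × Fin n => p.1 < p.2 ∧ f p.2 < f p.1)).card

/-- The adjacent transposition `s_i` exchanging `i` and `i+1` (one-indexed),
as a permutation of `Fin n`. -/
def sgen (n : ℕ) (i : ℕ) : Equiv.Perm (Fin n) :=
  if h : 1 ≤ i ∧ i < n then Equiv.swap ⟨i - 1, by omega⟩ ⟨i, h.2⟩ else 1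

/-- Left weak order: `x ≥_W y` iff `x = s_{i₁} ⋯ s_{i_k} · y` with `ℓ(x) = ℓ(y) + k`. -/
def WeakGE {n : ℕ} (x y : Equiv.Perm (Fin n)) : Prop :=
  ∃ l : List ℕ, (∀ i ∈ l, 1 ≤ i ∧ i ≤ n - 1) ∧
    x = (l.map (sgen n)).prod * y ∧ invCount ⇑x = invCount ⇑y + l.length

/-- The projection `x ↦ x̂` deleting the last position and the value `x(n)`. -/
def hatf {n : ℕ} (x : Fin (n + 1) → Fin (n + 1)) : Fin n → Fin n :=
  fun i =>
    if h : (x i.castSucc).val < (x (Fin.last n)).val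
    then ⟨(x i.castSucc).val, by have h1 := (x (Fin.last n)).isLt; omega⟩
    else ⟨(x i.castSucc).val - 1, by have h1 := (x i.castSucc).isLt; have h2 := i.isLt; omega⟩

/-- `lam n f k` is `λ_k` of the permutation of `[n]` with one-line notation `f(1), …, f(n)`
(one-indexed): `λ_{n-1}(x) = n - x(n)` and `λ_k(x) = λ_k(x̄)` for `k ≤ n - 2`, where
`x̄ ∈ S_{n-1}` is the restriction of `u⁻¹·x` (`u = s_{x(n)} ⋯ s_{n-1}`), concretely
`x̄(i) = x(i)` if `x(i) < x(n)` and `x̄(i) = x(i) - 1` if `x(i) > x(n)`. -/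
def lam : ℕ → (ℕ → ℕ) → ℕ → ℕ
  | 0, _, _ => 0
  | n + 1, f, k =>
    if k = n then (n + 1) - f (n + 1)
    else lam n (fun i => if f i < f (n + 1) then f i else f i - 1) k

/-- The one-line notation of `x`, as a one-indexed function `ℕ → ℕ`. -/
def oneline {n : ℕ} (x : Fin n → Fin n) : ℕ → ℕ :=
  fun i => if h : i - 1 < n then (x ⟨i - 1, h⟩).val + 1 else 0

/-- `y` contains the pattern `σ`. -/
def ContainsPattern {n m : ℕ} (y : Equiv.Perm (Fin n)) (σ : Equiv.Perm (Fin m)) : Prop :=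
  ∃ f : Fin m → Fin n, StrictMono f ∧ ∀ j k, y (f j) < y (f k) ↔ σ j < σ k

/-- `x` is an AR (Arndt–Riehl) permutation: `x⁻¹(i) ≤ i + 1` for all `i ∈ [n]`. -/
def IsAR {n : ℕ} (x : Equiv.Perm (Fin n)) : Prop :=
  ∀ i : Fin n, (x.symm i).val ≤ i.val + 1

namespace S11

variable {n : ℕ}

/-- Reach condition in the conjugated world. -/
def Phi (p q : Equiv.Perm (Fin n)) : Prop :=
  ∀ i t : Fin n, p i ≤ t → t < q i → q.symm t < i

def conjP (x : Equiv.Perm (Fin n)) : Equiv.Perm (Fin n) :=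
  (Fin.revPerm.trans x).trans Fin.revPerm

lemma conjP_coe (x : Equiv.Perm (Fin n)) : ⇑(conjP x) = pconj ⇑x := rfl

lemma conjP_conjP (x : Equiv.Perm (Fin n)) : conjP (conjP x) = x := by
  ext i; simp [conjP, Fin.rev_rev]

lemma conjP_symm (x : Equiv.Perm (Fin n)) (t : Fin n) :
    (conjP x).symm t = (x.symm t.rev).rev := rfl

lemma invCount_conjP (x : Equiv.Perm (Fin n)) : invCount ⇑(conjP x) = invCount ⇑x := by
  unfold invCount
  apply Finset.card_bij' (fun p _ => (p.2.rev, p.1.rev)) (fun p _ => (p.2.rev, p.1.rev))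
  case left_inv => rintro ⟨i, j⟩ _; simp [Fin.rev_rev]
  case right_inv => rintro ⟨i, j⟩ _; simp [Fin.rev_rev]
  case hi =>
    rintro ⟨i, j⟩ h
    simp only [Finset.mem_filter, Finset.mem_univ, true_and] at h ⊢
    obtain ⟨h1, h2⟩ := h
    refine ⟨Fin.rev_lt_rev.mpr h1, ?_⟩
    simpa [conjP_coe, pconj, Fin.rev_rev, Fin.rev_lt_rev] using h2
  case hj =>
    rintro ⟨i, j⟩ h
    simp only [Finset.mem_filter, Finset.mem_univ, true_and] at h ⊢
    obtain ⟨h1, h2⟩ := h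
    refine ⟨Fin.rev_lt_rev.mpr h1, ?_⟩
    simp [conjP_coe, pconj, Fin.rev_rev, Fin.rev_lt_rev, h2]

lemma perm_eq_of_le (p q : Equiv.Perm (Fin n)) (h : ∀ i, p i ≤ q i) : p = q := by
  have hsum : ∑ i, (p i : ℕ) = ∑ i, (q i : ℕ) := by
    rw [Equiv.sum_comp p (fun i => (i : ℕ)), Equiv.sum_comp q (fun i => (i : ℕ))]
  have := (Finset.sum_eq_sum_iff_of_le (s := Finset.univ)
    (f := fun i => ((p i : ℕ))) (g := fun i => ((q i : ℕ)))
    (fun i _ => h i)).mp hsum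
  ext i
  exact this i (Finset.mem_univ i)



lemma finStrong {P : Fin n → Prop} (h : ∀ i : Fin n, (∀ j, j < i → P j) → P i) (i : Fin n) :
    P i := by
  have key : ∀ m : ℕ, ∀ i : Fin n, (i : ℕ) = m → P i := by
    intro m
    induction m using Nat.strong_induction_on with
    | _ m IH =>
      intro i him
      exact h i (fun j hj => IH (j : ℕ) (him ▸ hj) j rfl)
  exact key (i : ℕ) i rfl

lemma outcome_unique {a o o' : Fin n → Fin n} (h : IsAOutcome a o) (h' : IsAOutcome a o') :
    o = o' := by
  obtain ⟨hinj, hp⟩ := h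
  obtain ⟨hinj', hp'⟩ := h'
  funext i
  refine finStrong (P := fun i => o i = o' i) (fun i IH => ?_) i
  by_contra hne
  rcases lt_or_gt_of_ne hne with hlt | hlt
  · obtain ⟨j, hj, hoj⟩ := (hp' i).2 (o i) (hp i).1 hlt
    exact absurd (hinj ((IH j hj).trans hoj)) hj.ne
  · obtain ⟨j, hj, hoj⟩ := (hp i).2 (o' i) (hp' i).1 hlt
    exact absurd (hinj' ((IH j hj).symm.trans hoj)) hj.ne

lemma boutcome_eq {a b o x : Fin n → Fin n} (h : IsBOutcome a b o) (h' : IsAOutcome a x) :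
    o = x := by
  obtain ⟨hinj, hp⟩ := h
  obtain ⟨hinj', hp'⟩ := h'
  funext i
  refine finStrong (P := fun i => o i = x i) (fun i IH => ?_) i
  by_contra hne
  rcases lt_or_gt_of_ne hne with hlt | hlt
  · obtain ⟨j, hj, hoj⟩ := (hp' i).2 (o i) (hp i).1 hlt
    exact absurd (hinj ((IH j hj).trans hoj)) hj.ne
  · obtain ⟨j, hj, hoj⟩ := (hp i).2.2 (x i) (hp' i).1 hlt
    exact absurd (hinj' ((IH j hj).symm.trans hoj)) hj.ne

lemma reaches_iff (x y : Equiv.Perm (Fin n)) :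
    Reaches ⇑x ⇑y ↔ Phi (conjP x) (conjP y) := by
  constructor
  · rintro ⟨a, b, ⟨o, hB⟩, hAx, hAy⟩
    have hox : o = ⇑x := boutcome_eq hB hAx
    subst hox
    intro i t h1 h2
    have hxb : ∀ j, x j ≤ b j := fun j => (hB.2 j).2.1
    have hdb : pconj b i ≤ conjP x i := by
      simpa [pconj, conjP_coe, Fin.rev_le_rev] using Fin.rev_le_rev.mpr (hxb i.rev)
    rw [conjP_coe] at h2
    obtain ⟨j, hj, hoj⟩ := (hAy.2 i).2 t (le_trans hdb h1) h2
    have hcj : conjP y j = t := by rw [conjP_coe]; exact hoj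
    have : (conjP y).symm t = j := by rw [← hcj]; exact (conjP y).symm_apply_apply j
    rw [this]; exact hj
  · intro hφ
    set p := conjP x with hp
    set q := conjP y with hq
    refine ⟨⇑x, pconj (fun i => min (p i) (q i)), ⟨⇑x, ?_⟩, ?_, ?_⟩
    · refine ⟨x.injective, fun i => ⟨le_refl _, ?_, fun s hs1 hs2 => absurd (lt_of_le_of_lt hs1 hs2) (lt_irrefl _)⟩⟩
      · show x i ≤ (min (p i.rev) (q i.rev)).rev
        have h1 : min (p i.rev) (q i.rev) ≤ p i.rev := min_le_left _ _
        have h2 : (p i.rev).rev = x i := by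
          show ((conjP x) i.rev).rev = x i
          rw [conjP_coe]; show ((x i.rev.rev).rev).rev = x i
          rw [Fin.rev_rev, Fin.rev_rev]
        calc x i = (p i.rev).rev := h2.symm
        _ ≤ (min (p i.rev) (q i.rev)).rev := Fin.rev_le_rev.mpr h1
    · exact ⟨x.injective, fun i => ⟨le_refl _, fun s hs1 hs2 => absurd (lt_of_le_of_lt hs1 hs2) (lt_irrefl _)⟩⟩
    · have hpc : pconj (pconj (fun i => min (p i) (q i))) = (fun i => min (p i) (q i)) := by
        funext i; simp [pconj, Fin.rev_rev]
      rw [hpc, ← conjP_coe, ← hq]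
      refine ⟨q.injective, fun i => ⟨min_le_right _ _, fun s hs1 hs2 => ?_⟩⟩
      have hps : p i ≤ s := by
        have hs1' : min (p i) (q i) ≤ s := hs1
        rcases le_total (p i) (q i) with hle | hle
        · rwa [min_eq_left hle] at hs1'
        · rw [min_eq_right hle] at hs1'; exact absurd hs2 (not_lt.mpr hs1')
      exact ⟨q.symm s, hφ i s hps hs2, q.apply_symm_apply s⟩

lemma invCount_le_sq (f : Fin n → Fin n) : invCount f ≤ n * n := by
  unfold invCount
  calc (Finset.univ.filter _).card ≤ (Finset.univ : Finset (Fin n × Fin n)).card :=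
        Finset.card_filter_le _ _
  _ = n * n := by simp

lemma phi_step {p q : Equiv.Perm (Fin n)} (hφ : Phi p q) (hne : p ≠ q) :
    ∃ r : Equiv.Perm (Fin n), Phi p r ∧ Phi r q ∧ invCount ⇑r = invCount ⇑q + 1 := by
  classical
  -- the set of positions where q < p is nonempty
  have hSne : (Finset.univ.filter (fun j : Fin n => q j < p j)).Nonempty := by
    by_contra hS
    rw [Finset.not_nonempty_iff_eq_empty, Finset.filter_eq_empty_iff] at hS
    exact hne (perm_eq_of_le p q (fun i => not_lt.mp (hS (Finset.mem_univ i))))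
  obtain ⟨j, hjS, hjmax⟩ := Finset.exists_max_image _ (fun j => q j) hSne
  rw [Finset.mem_filter] at hjS
  have hupj : q j < p j := hjS.2
  -- existence of a position right of j carrying a value above q j
  have hTne : (Finset.univ.filter (fun i : Fin n => j < i ∧ q j < q i)).Nonempty := by
    by_contra hT
    rw [Finset.not_nonempty_iff_eq_empty, Finset.filter_eq_empty_iff] at hT
    have hB : ∀ i ∈ insert j (Finset.univ.filter (fun i : Fin n => q j < q i)),
        p i ∈ Finset.univ.filter (fun v : Fin n => q j < v) := by
      intro i hi
      rw [Finset.mem_insert] at hi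
      rw [Finset.mem_filter]
      rcases hi with rfl | hi
      · exact ⟨Finset.mem_univ _, hupj⟩
      · rw [Finset.mem_filter] at hi
        refine ⟨Finset.mem_univ _, ?_⟩
        by_contra hpu
        push_neg at hpu
        have hqu : q.symm (q j) < i := hφ i (q j) hpu hi.2
        rw [q.symm_apply_apply j] at hqu
        exact hT (Finset.mem_univ i) ⟨hqu, hi.2⟩
    have hinj : Set.InjOn p ↑(insert j (Finset.univ.filter (fun i : Fin n => q j < q i))) :=
      fun a _ b _ hab => p.injective hab
    have hcard := Finset.card_le_card_of_injOn _ hB hinj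
    have hjnot : j ∉ Finset.univ.filter (fun i : Fin n => q j < q i) := by simp
    rw [Finset.card_insert_of_notMem hjnot] at hcard
    have hceq : (Finset.univ.filter (fun i : Fin n => q j < q i)).card
        = (Finset.univ.filter (fun v : Fin n => q j < v)).card := by
      apply Finset.card_bij (fun i _ => q i)
      · intro a ha; rw [Finset.mem_filter] at ha ⊢; exact ⟨Finset.mem_univ _, ha.2⟩
      · intro a _ b _ h; exact q.injective h
      · intro v hv; rw [Finset.mem_filter] at hv
        exact ⟨q.symm v, by rw [Finset.mem_filter]; exact ⟨Finset.mem_univ _, by simpa using hv.2⟩,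
          q.apply_symm_apply v⟩
    omega
  obtain ⟨k, hkT, hkmin⟩ := Finset.exists_min_image _ (fun i => q i) hTne
  rw [Finset.mem_filter] at hkT
  obtain ⟨-, hjk, huqk⟩ := hkT
  have hkmin' : ∀ i : Fin n, j < i → q j < q i → q k ≤ q i := by
    intro i h1 h2
    exact hkmin i (by rw [Finset.mem_filter]; exact ⟨Finset.mem_univ _, h1, h2⟩)
  -- C1: intermediate values sit to the left of j
  have hC1 : ∀ v : Fin n, q j < v → v < q k → q.symm v < j := by
    intro v h1 h2
    rcases lt_trichotomy (q.symm v) j with h | h | h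
    · exact h
    · exfalso
      have hv : v = q j := by rw [← h, q.apply_symm_apply]
      rw [hv] at h1; exact absurd h1 (lt_irrefl _)
    · exfalso
      have hqv : q j < q (q.symm v) := by rwa [q.apply_symm_apply]
      have := hkmin' (q.symm v) h hqv
      rw [q.apply_symm_apply] at this
      exact absurd h2 (not_lt.mpr this)
  have hmid : ∀ i : Fin n, j < i → i < k → q i < q j ∨ q k < q i := by
    intro i h1 h2
    rcases lt_trichotomy (q i) (q j) with h | h | h
    · exact Or.inl h
    · exact absurd (q.injective h) (ne_of_gt h1)
    · right
      have := hkmin' i h1 h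
      exact lt_of_le_of_ne this (fun he => absurd (q.injective he) (ne_of_gt h2))
  -- the new permutation r
  set r : Equiv.Perm (Fin n) := q * Equiv.swap j k with hrdef
  have τj : Equiv.swap j k j = k := Equiv.swap_apply_left j k
  have τk : Equiv.swap j k k = j := Equiv.swap_apply_right j k
  have τo : ∀ i : Fin n, i ≠ j → i ≠ k → Equiv.swap j k i = i :=
    fun i h1 h2 => Equiv.swap_apply_of_ne_of_ne h1 h2
  have hrj : r j = q k := by rw [hrdef]; simp [Equiv.Perm.mul_apply, τj]
  have hrk : r k = q j := by rw [hrdef]; simp [Equiv.Perm.mul_apply, τk]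
  have hro : ∀ i : Fin n, i ≠ j → i ≠ k → r i = q i := by
    intro i h1 h2; rw [hrdef]; simp [Equiv.Perm.mul_apply, τo i h1 h2]
  have hrsymm : ∀ t : Fin n, r.symm t = Equiv.swap j k (q.symm t) := by
    intro t
    rw [hrdef]
    simp [Equiv.Perm.mul_def]
  have hqsu : q.symm (q j) = j := q.symm_apply_apply j
  have hqsw : q.symm (q k) = k := q.symm_apply_apply k
  refine ⟨r, ?_, ?_, ?_⟩
  · -- Phi p r
    intro i t h1 h2
    rw [hrsymm]
    by_cases hij : i = j
    · subst hij
      rw [hrj] at h2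
      have hut : q i < t := lt_of_lt_of_le hupj h1
      have h3 := hC1 t hut h2
      have hne1 : q.symm t ≠ i := ne_of_lt h3
      have hne2 : q.symm t ≠ k := ne_of_lt (lt_trans h3 hjk)
      rw [τo _ hne1 hne2]
      exact h3
    · by_cases hik : i = k
      · subst hik
        rw [hrk] at h2
        have h3 := hφ i t h1 (lt_trans h2 huqk)
        have hne1 : q.symm t ≠ j := by
          intro he
          have ht : t = q j := by rw [← q.apply_symm_apply t, he]
          rw [ht] at h2; exact absurd h2 (lt_irrefl _)
        have hne2 : q.symm t ≠ i := by
          intro he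
          have ht : t = q i := by rw [← q.apply_symm_apply t, he]
          rw [ht] at h2; exact absurd (lt_trans h2 huqk) (lt_irrefl _)
        rw [τo _ hne1 hne2]
        exact h3
      · rw [hro i hij hik] at h2
        have h3 := hφ i t h1 h2
        by_cases htu : t = q j
        · rw [htu, hqsu, τj]
          have hji : j < i := by rw [htu, hqsu] at h3; exact h3
          have hqi : q j < q i := by rw [← htu]; exact h2
          have hwk : q k ≤ q i := hkmin' i hji hqi
          have hwk' : q k < q i := lt_of_le_of_ne hwk (fun he => hik ((q.injective he).symm))
          have hptk : p i ≤ q k := le_of_lt (lt_of_le_of_lt h1 (by rw [htu]; exact huqk))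
          have h5 := hφ i (q k) hptk hwk'
          rw [hqsw] at h5
          exact h5
        · by_cases htw : t = q k
          · rw [htw, hqsw, τk]
            rw [htw, hqsw] at h3
            exact lt_trans hjk h3
          · have hne1 : q.symm t ≠ j := fun he => htu (by rw [← q.apply_symm_apply t, he])
            have hne2 : q.symm t ≠ k := fun he => htw (by rw [← q.apply_symm_apply t, he])
            rw [τo _ hne1 hne2]
            exact h3
  · -- Phi r q
    intro i t h1 h2
    by_cases hij : i = j
    · subst hij
      rw [hrj] at h1
      exact absurd (lt_of_le_of_lt h1 h2) (not_lt.mpr (le_of_lt huqk))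
    · by_cases hik : i = k
      · subst hik
        rw [hrk] at h1
        rcases eq_or_lt_of_le h1 with he | hlt
        · rw [← he, hqsu]; exact hjk
        · exact lt_trans (hC1 t hlt h2) hjk
      · rw [hro i hij hik] at h1
        exact absurd (lt_of_le_of_lt h1 h2) (lt_irrefl _)
  · -- the inversion count
    have hmemr : (j, k) ∈ Finset.univ.filter
        (fun a : Fin n × Fin n => a.1 < a.2 ∧ r a.2 < r a.1) := by
      rw [Finset.mem_filter]
      exact ⟨Finset.mem_univ _, hjk, by rw [hrj, hrk]; exact huqk⟩
    show (Finset.univ.filter (fun a : Fin n × Fin n => a.1 < a.2 ∧ r a.2 < r a.1)).card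
        = (Finset.univ.filter (fun a : Fin n × Fin n => a.1 < a.2 ∧ q a.2 < q a.1)).card + 1
    rw [← Finset.card_erase_add_one hmemr]
    congr 1
    have hF : ∀ i₁ i₂ : Fin n, ∃ b : Fin n × Fin n,
        (if Equiv.swap j k i₁ < Equiv.swap j k i₂
          then (Equiv.swap j k i₁, Equiv.swap j k i₂) else (i₁, i₂)) = b := fun i₁ i₂ => ⟨_, rfl⟩
    set F : Fin n × Fin n → Fin n × Fin n := fun a =>
      if Equiv.swap j k a.1 < Equiv.swap j k a.2
      then (Equiv.swap j k a.1, Equiv.swap j k a.2) else a with hFdef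
    have hFpos : ∀ i₁ i₂ : Fin n, Equiv.swap j k i₁ < Equiv.swap j k i₂ →
        F (i₁, i₂) = (Equiv.swap j k i₁, Equiv.swap j k i₂) := by
      intro i₁ i₂ h; rw [hFdef]; exact if_pos h
    have hFneg : ∀ i₁ i₂ : Fin n, ¬ (Equiv.swap j k i₁ < Equiv.swap j k i₂) →
        F (i₁, i₂) = (i₁, i₂) := by
      intro i₁ i₂ h; rw [hFdef]; exact if_neg h
    have hFF : ∀ i₁ i₂ : Fin n, i₁ < i₂ → F (F (i₁, i₂)) = (i₁, i₂) := by
      intro i₁ i₂ h12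
      by_cases hc : Equiv.swap j k (i₁, i₂).1 < Equiv.swap j k (i₁, i₂).2
      · rw [hFpos i₁ i₂ hc]
        have hc2 : Equiv.swap j k (Equiv.swap j k i₁) < Equiv.swap j k (Equiv.swap j k i₂) := by
          simp only [Equiv.swap_apply_self]; exact h12
        rw [hFpos _ _ hc2]
        simp only [Equiv.swap_apply_self]
      · rw [hFneg i₁ i₂ hc, hFneg i₁ i₂ hc]
    apply Finset.card_bij' (fun a _ => F a) (fun a _ => F a)
    case left_inv =>
      rintro ⟨i₁, i₂⟩ ha
      rw [Finset.mem_erase, Finset.mem_filter] at ha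
      exact hFF i₁ i₂ ha.2.2.1
    case right_inv =>
      rintro ⟨i₁, i₂⟩ ha
      rw [Finset.mem_filter] at ha
      exact hFF i₁ i₂ ha.2.1
    case hi =>
      rintro ⟨i₁, i₂⟩ ha
      rw [Finset.mem_erase, Finset.mem_filter] at ha
      obtain ⟨hane, -, h12, hinv⟩ := ha
      simp only [Finset.mem_filter, Finset.mem_univ, true_and]
      by_cases h1j : i₁ = j
      · rw [h1j] at h12 hinv hane ⊢
        have h2j : i₂ ≠ j := ne_of_gt h12
        have h2k : i₂ ≠ k := fun he => hane (by rw [he])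
        rw [hrj, hro i₂ h2j h2k] at hinv
        by_cases h2lt : i₂ < k
        · have hq2u : q i₂ < q j := by
            rcases hmid i₂ h12 h2lt with h | h
            · exact h
            · exact absurd hinv (not_lt.mpr (le_of_lt h))
          have hcond : ¬ (Equiv.swap j k j < Equiv.swap j k i₂) := by
            rw [τj, τo i₂ h2j h2k]; exact not_lt.mpr (le_of_lt h2lt)
          rw [hFneg _ _ hcond]
          exact ⟨h12, hq2u⟩
        · have h2gt : k < i₂ := lt_of_le_of_ne (not_lt.mp h2lt) (fun he => h2k he.symm)
          have hcond : Equiv.swap j k j < Equiv.swap j k i₂ := by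
            rw [τj, τo i₂ h2j h2k]; exact h2gt
          rw [hFpos _ _ hcond, τj, τo i₂ h2j h2k]
          exact ⟨h2gt, hinv⟩
      · by_cases h2k : i₂ = k
        · rw [h2k] at h12 hinv ⊢
          have h1k : i₁ ≠ k := ne_of_lt h12
          rw [hrk, hro i₁ h1j h1k] at hinv
          by_cases h1lt : i₁ < j
          · have hcond : Equiv.swap j k i₁ < Equiv.swap j k k := by
              rw [τk, τo i₁ h1j h1k]; exact h1lt
            rw [hFpos _ _ hcond, τk, τo i₁ h1j h1k]
            exact ⟨h1lt, hinv⟩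
          · have h1gt : j < i₁ := lt_of_le_of_ne (not_lt.mp h1lt) (fun he => h1j he.symm)
            have hqk1 : q k < q i₁ := by
              rcases hmid i₁ h1gt h12 with h | h
              · exact absurd hinv (not_lt.mpr (le_of_lt h))
              · exact h
            have hcond : ¬ (Equiv.swap j k i₁ < Equiv.swap j k k) := by
              rw [τk, τo i₁ h1j h1k]; exact not_lt.mpr (le_of_lt h1gt)
            rw [hFneg _ _ hcond]
            exact ⟨h12, hqk1⟩
        · by_cases h1k : i₁ = k
          · rw [h1k] at h12 hinv ⊢
            have h2j : i₂ ≠ j := ne_of_gt (lt_trans hjk h12)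
            rw [hrk, hro i₂ h2j h2k] at hinv
            have hcond : Equiv.swap j k k < Equiv.swap j k i₂ := by
              rw [τk, τo i₂ h2j h2k]; exact lt_trans hjk h12
            rw [hFpos _ _ hcond, τk, τo i₂ h2j h2k]
            exact ⟨lt_trans hjk h12, hinv⟩
          · by_cases h2j : i₂ = j
            · rw [h2j] at h12 hinv ⊢
              rw [hrj, hro i₁ h1j h1k] at hinv
              have hcond : Equiv.swap j k i₁ < Equiv.swap j k j := by
                rw [τj, τo i₁ h1j h1k]; exact lt_trans h12 hjk
              rw [hFpos _ _ hcond, τj, τo i₁ h1j h1k]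
              exact ⟨lt_trans h12 hjk, hinv⟩
            · rw [hro i₂ h2j h2k, hro i₁ h1j h1k] at hinv
              have hcond : Equiv.swap j k i₁ < Equiv.swap j k i₂ := by
                rw [τo i₁ h1j h1k, τo i₂ h2j h2k]; exact h12
              rw [hFpos _ _ hcond, τo i₁ h1j h1k, τo i₂ h2j h2k]
              exact ⟨h12, hinv⟩
    case hj =>
      rintro ⟨i₁, i₂⟩ ha
      rw [Finset.mem_filter] at ha
      obtain ⟨-, h12, hinv⟩ := ha
      rw [Finset.mem_erase]
      simp only [Finset.mem_filter, Finset.mem_univ, true_and]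
      by_cases h1j : i₁ = j
      · rw [h1j] at h12 hinv ⊢
        have h2j : i₂ ≠ j := ne_of_gt h12
        have h2k : i₂ ≠ k := by
          intro he; rw [he] at hinv; exact absurd (lt_trans hinv huqk) (lt_irrefl _)
        by_cases h2lt : i₂ < k
        · have hcond : ¬ (Equiv.swap j k j < Equiv.swap j k i₂) := by
            rw [τj, τo i₂ h2j h2k]; exact not_lt.mpr (le_of_lt h2lt)
          rw [hFneg _ _ hcond]
          refine ⟨?_, h12, ?_⟩
          · intro he; simp only [Prod.mk.injEq] at he; exact h2k he.2
          · rw [hrj, hro i₂ h2j h2k]; exact lt_trans hinv huqk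
        · have h2gt : k < i₂ := lt_of_le_of_ne (not_lt.mp h2lt) (fun he => h2k he.symm)
          have hcond : Equiv.swap j k j < Equiv.swap j k i₂ := by
            rw [τj, τo i₂ h2j h2k]; exact h2gt
          rw [hFpos _ _ hcond, τj, τo i₂ h2j h2k]
          refine ⟨?_, h2gt, ?_⟩
          · intro he; simp only [Prod.mk.injEq] at he; exact (ne_of_gt hjk) he.1
          · rw [hrk, hro i₂ h2j h2k]; exact hinv
      · by_cases h2k : i₂ = k
        · rw [h2k] at h12 hinv ⊢
          have h1k : i₁ ≠ k := ne_of_lt h12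
          by_cases h1lt : i₁ < j
          · have hcond : Equiv.swap j k i₁ < Equiv.swap j k k := by
              rw [τk, τo i₁ h1j h1k]; exact h1lt
            rw [hFpos _ _ hcond, τk, τo i₁ h1j h1k]
            refine ⟨?_, h1lt, ?_⟩
            · intro he; simp only [Prod.mk.injEq] at he; exact h1j he.1
            · rw [hrj, hro i₁ h1j h1k]; exact hinv
          · have h1gt : j < i₁ := lt_of_le_of_ne (not_lt.mp h1lt) (fun he => h1j he.symm)
            have hcond : ¬ (Equiv.swap j k i₁ < Equiv.swap j k k) := by
              rw [τk, τo i₁ h1j h1k]; exact not_lt.mpr (le_of_lt h1gt)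
            rw [hFneg _ _ hcond]
            refine ⟨?_, h12, ?_⟩
            · intro he; simp only [Prod.mk.injEq] at he; exact h1j he.1
            · rw [hrk, hro i₁ h1j h1k]; exact lt_trans huqk hinv
        · by_cases h1k : i₁ = k
          · rw [h1k] at h12 hinv ⊢
            have h2j : i₂ ≠ j := ne_of_gt (lt_trans hjk h12)
            have hcond : Equiv.swap j k k < Equiv.swap j k i₂ := by
              rw [τk, τo i₂ h2j h2k]; exact lt_trans hjk h12
            rw [hFpos _ _ hcond, τk, τo i₂ h2j h2k]
            refine ⟨?_, lt_trans hjk h12, ?_⟩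
            · intro he; simp only [Prod.mk.injEq] at he; exact h2k he.2
            · rw [hrj, hro i₂ h2j h2k]; exact hinv
          · by_cases h2j : i₂ = j
            · rw [h2j] at h12 hinv ⊢
              have hcond : Equiv.swap j k i₁ < Equiv.swap j k j := by
                rw [τj, τo i₁ h1j h1k]; exact lt_trans h12 hjk
              rw [hFpos _ _ hcond, τj, τo i₁ h1j h1k]
              refine ⟨?_, lt_trans h12 hjk, ?_⟩
              · intro he; simp only [Prod.mk.injEq] at he; exact h1j he.1
              · rw [hrk, hro i₁ h1j h1k]; exact hinv
            · have hcond : Equiv.swap j k i₁ < Equiv.swap j k i₂ := by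
                rw [τo i₁ h1j h1k, τo i₂ h2j h2k]; exact h12
              rw [hFpos _ _ hcond, τo i₁ h1j h1k, τo i₂ h2j h2k]
              refine ⟨?_, h12, ?_⟩
              · intro he; simp only [Prod.mk.injEq] at he; exact h1j he.1
              · rw [hro i₂ h2j h2k, hro i₁ h1j h1k]; exact hinv

lemma phi_chain : ∀ N : ℕ, ∀ p q : Equiv.Perm (Fin n), n * n - invCount ⇑q ≤ N → Phi p q →
    invCount ⇑q ≤ invCount ⇑p ∧ ∃ f : ℕ → Equiv.Perm (Fin n), f 0 = q ∧
      f (invCount ⇑p - invCount ⇑q) = p ∧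
      ∀ k, 1 ≤ k → k ≤ invCount ⇑p - invCount ⇑q →
        Phi (f k) (f (k - 1)) ∧ invCount ⇑(f k) = invCount ⇑q + k := by
  intro N
  induction N with
  | zero =>
    intro p q hN hφ
    by_cases hpq : p = q
    · subst hpq
      exact ⟨le_refl _, fun _ => p, rfl, by simp, fun k hk1 hk2 => by omega⟩
    · exfalso
      obtain ⟨r, hpr, hrq, hlen⟩ := phi_step hφ hpq
      have := invCount_le_sq ⇑r
      omega
  | succ N IH =>
    intro p q hN hφ
    by_cases hpq : p = q
    · subst hpq
      exact ⟨le_refl _, fun _ => p, rfl, by simp, fun k hk1 hk2 => by omega⟩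
    · obtain ⟨r, hpr, hrq, hlen⟩ := phi_step hφ hpq
      have hbr := invCount_le_sq ⇑r
      have hmeas : n * n - invCount ⇑r ≤ N := by omega
      obtain ⟨hle, f', h0, hm, hstep⟩ := IH p r hmeas hpr
      have hle2 : invCount ⇑q ≤ invCount ⇑p := by omega
      have hm' : invCount ⇑p - invCount ⇑q = (invCount ⇑p - invCount ⇑r) + 1 := by omega
      refine ⟨hle2, fun k => if k = 0 then q else f' (k - 1), if_pos rfl, ?_, ?_⟩
      · rw [hm']
        show (if invCount ⇑p - invCount ⇑r + 1 = 0 then q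
            else f' (invCount ⇑p - invCount ⇑r + 1 - 1)) = p
        rw [if_neg (Nat.succ_ne_zero _), Nat.add_sub_cancel]
        exact hm
      · intro k hk1 hk2
        have hgk : (if k = 0 then q else f' (k - 1)) = f' (k - 1) := if_neg (by omega)
        rcases Nat.eq_or_lt_of_le hk1 with h1 | h1
        · have hk : k = 1 := h1.symm
          subst hk
          constructor
          · show Phi (if 1 = 0 then q else f' (1 - 1)) (if 0 = 0 then q else f' (0 - 1))
            rw [if_neg one_ne_zero, if_pos rfl]
            show Phi (f' 0) q
            rw [h0]
            exact hrq
          · show invCount ⇑(if 1 = 0 then q else f' (1 - 1)) = invCount ⇑q + 1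
            rw [if_neg one_ne_zero]
            show invCount ⇑(f' 0) = invCount ⇑q + 1
            rw [h0]
            exact hlen
        · have hk2' : k - 1 ≤ invCount ⇑p - invCount ⇑r := by omega
          have hk1' : 1 ≤ k - 1 := by omega
          obtain ⟨hphi, hinv⟩ := hstep (k - 1) hk1' hk2'
          constructor
          · show Phi (if k = 0 then q else f' (k - 1)) (if k - 1 = 0 then q else f' (k - 1 - 1))
            rw [hgk, if_neg (by omega : ¬ (k - 1 = 0))]
            exact hphi
          · show invCount ⇑(if k = 0 then q else f' (k - 1)) = invCount ⇑q + k
            rw [hgk, hinv, hlen]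
            omega

end S11

/-- Prop. `reachable-graded`. If `x ⊵_R y` and `m = ℓ(x) - ℓ(y)`,
then there is a chain `y = x₀, x₁, …, x_m = x` with `x_k ⊵_R x_{k-1}` and
`ℓ(x_k) = ℓ(y) + k` for all `k ∈ [m]`. -/
theorem stmt11 {n : ℕ} (x y : Equiv.Perm (Fin n)) (h : Reaches ⇑x ⇑y) :
    ∃ f : ℕ → Equiv.Perm (Fin n), f 0 = y ∧ f (invCount ⇑x - invCount ⇑y) = x ∧
      ∀ k, 1 ≤ k → k ≤ invCount ⇑x - invCount ⇑y →
        Reaches ⇑(f k) ⇑(f (k - 1)) ∧ invCount ⇑(f k) = invCount ⇑y + k := by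
  rw [S11.reaches_iff] at h
  obtain ⟨hle, f, h0, hm, hstep⟩ := S11.phi_chain (n * n) (S11.conjP x) (S11.conjP y)
    (Nat.sub_le _ _) h
  have hcx : invCount ⇑(S11.conjP x) = invCount ⇑x := S11.invCount_conjP x
  have hcy : invCount ⇑(S11.conjP y) = invCount ⇑y := S11.invCount_conjP y
  have hdiff : invCount ⇑x - invCount ⇑y
      = invCount ⇑(S11.conjP x) - invCount ⇑(S11.conjP y) := by rw [hcx, hcy]
  refine ⟨fun k => S11.conjP (f k), ?_, ?_, ?_⟩
  · show S11.conjP (f 0) = y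
    rw [h0]
    exact S11.conjP_conjP y
  · show S11.conjP (f (invCount ⇑x - invCount ⇑y)) = x
    rw [hdiff, hm]
    exact S11.conjP_conjP x
  · intro k hk1 hk2
    rw [hdiff] at hk2
    obtain ⟨hphi, hinv⟩ := hstep k hk1 hk2
    constructor
    · rw [S11.reaches_iff]
      rw [S11.conjP_conjP, S11.conjP_conjP]
      exact hphi
    · show invCount ⇑(S11.conjP (f k)) = invCount ⇑y + k
      rw [S11.invCount_conjP, hinv, hcy]
end

section
/- The pseudoreachability order on S_n is graded by length: if x covers y in the pseudoreachability order (i.e., x >_P y and there is no z with x >_P z >_P y), then ℓ(x) = ℓ(y) + 1. -/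
def Cnd {n : ℕ} (x y : Fin n → Fin n) : Prop :=
  ∀ k t : Fin n, y k < t → t ≤ x k → ∃ m, k < m ∧ y m = t

lemma aoutcome_unique {n : ℕ} {a o₁ o₂ : Fin n → Fin n}
    (h1 : IsAOutcome a o₁) (h2 : IsAOutcome a o₂) : o₁ = o₂ := by
  have key : ∀ m : ℕ, ∀ i : Fin n, (i : ℕ) = m → o₁ i = o₂ i := by
    intro m
    induction m using Nat.strong_induction_on with
    | _ m ih =>
      intro i him
      by_contra hne
      rcases lt_or_gt_of_ne hne with hlt | hlt
      · obtain ⟨j, hj, hji⟩ := (h2.2 i).2 (o₁ i) (h1.2 i).1 hlt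
        have hje : o₁ j = o₂ j := ih j.val (by rw [← him]; exact hj) j rfl
        have : j = i := h1.1 (by rw [hje, hji])
        exact absurd this (ne_of_lt hj)
      · obtain ⟨j, hj, hji⟩ := (h1.2 i).2 (o₂ i) (h2.2 i).1 hlt
        have hje : o₁ j = o₂ j := ih j.val (by rw [← him]; exact hj) j rfl
        have : j = i := h2.1 (by rw [← hje, hji])
        exact absurd this (ne_of_lt hj)
  funext i
  exact key i.val i rfl

lemma isAOutcome_of_isBOutcome {n : ℕ} {a b o : Fin n → Fin n} (h : IsBOutcome a b o) :
    IsAOutcome a o :=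
  ⟨h.1, fun i => ⟨(h.2 i).1, (h.2 i).2.2⟩⟩

lemma C_of_reaches {n : ℕ} {x y : Fin n → Fin n} (h : Reaches x y) : Cnd x y := by
  obtain ⟨a, b, ⟨o, hB⟩, hA, hA'⟩ := h
  have hox : o = x := aoutcome_unique (isAOutcome_of_isBOutcome hB) hA
  have hxb : ∀ i, x i ≤ b i := fun i => hox ▸ (hB.2 i).2.1
  intro k t h1 h2
  have h3 : (b k.rev.rev).rev ≤ t.rev := by
    rw [Fin.rev_rev]
    exact Fin.rev_le_rev.mpr (le_trans h2 (hxb k))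
  have h4 : t.rev < (y k.rev.rev).rev := by
    rw [Fin.rev_rev]
    exact Fin.rev_lt_rev.mpr h1
  obtain ⟨j, hj, hji⟩ := (hA'.2 k.rev).2 t.rev h3 h4
  refine ⟨j.rev, ?_, ?_⟩
  · rw [show k = k.rev.rev from (Fin.rev_rev k).symm]
    exact Fin.rev_lt_rev.mpr hj
  · have : (y j.rev).rev = t.rev := hji
    have := Fin.rev_injective this
    exact this

lemma reaches_of_C {n : ℕ} {x y : Fin n → Fin n} (hx : Function.Injective x)
    (hy : Function.Injective y) (h : Cnd x y) : Reaches x y := by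
  refine ⟨x, fun k => max (x k) (y k), ⟨x, hx, fun i => ⟨le_refl _, le_max_left _ _,
    fun s h1 h2 => absurd (lt_of_le_of_lt h1 h2) (lt_irrefl _)⟩⟩,
    ⟨hx, fun i => ⟨le_refl _, fun s h1 h2 => absurd (lt_of_le_of_lt h1 h2) (lt_irrefl _)⟩⟩,
    ?_, ?_⟩
  · intro i j hij
    have : y i.rev = y j.rev := Fin.rev_injective hij
    have := hy this
    have : i.rev.rev = j.rev.rev := by rw [this]
    rwa [Fin.rev_rev, Fin.rev_rev] at this
  · intro i
    constructor
    · exact Fin.rev_le_rev.mpr (le_max_right _ _)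
    · intro s h1 h2
      set k := i.rev with hk
      set t := s.rev with ht
      have hyt : y k < t := by
        rw [show s = t.rev from (Fin.rev_rev s).symm] at h2
        exact Fin.rev_lt_rev.mp h2
      have hbt : t ≤ max (x k) (y k) := by
        rw [show s = t.rev from (Fin.rev_rev s).symm] at h1
        exact Fin.rev_le_rev.mp h1
      have hxt : t ≤ x k := by
        rcases max_cases (x k) (y k) with ⟨he, _⟩ | ⟨he, _⟩
        · rwa [he] at hbt
        · rw [he] at hbt; exact absurd hyt (not_lt.mpr hbt)
      obtain ⟨m, hm, hmt⟩ := h k t hyt hxt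
      refine ⟨m.rev, ?_, ?_⟩
      · rw [hk] at hm
        have := Fin.rev_lt_rev.mpr hm
        rwa [Fin.rev_rev] at this
      · show (y m.rev.rev).rev = s
        rw [Fin.rev_rev, hmt, ht, Fin.rev_rev]

lemma invCount_reindex {n : ℕ} (y σ : Equiv.Perm (Fin n)) (hσσ : ∀ k, σ (σ k) = k) :
    invCount ⇑(y * σ) =
      (Finset.univ.filter
        (fun pr : Fin n × Fin n => σ pr.1 < σ pr.2 ∧ y pr.2 < y pr.1)).card := by
  unfold invCount
  apply Finset.card_bij' (fun pr _ => (σ pr.1, σ pr.2)) (fun pr _ => (σ pr.1, σ pr.2))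
  · intro pr hpr
    simp only [Finset.mem_filter, Finset.mem_univ, true_and] at hpr ⊢
    exact ⟨by rw [hσσ, hσσ]; exact hpr.1, hpr.2⟩
  · intro pr hpr
    simp only [Finset.mem_filter, Finset.mem_univ, true_and] at hpr ⊢
    refine ⟨hpr.1, ?_⟩
    show y (σ (σ pr.2)) < y (σ (σ pr.1))
    rw [hσσ, hσσ]; exact hpr.2
  · intro pr _; simp [hσσ]
  · intro pr _; simp [hσσ]

open Finset in
lemma invCount_swap {n : ℕ} (y : Equiv.Perm (Fin n)) (p q : Fin n) (hpq : p < q)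
    (hval : y p < y q) (hmid : ∀ k, p < k → k < q → y k < y p ∨ y q < y k) :
    invCount ⇑(y * Equiv.swap p q) = invCount ⇑y + 1 := by
  classical
  set σ := Equiv.swap p q with hσdef
  have hσp : σ p = q := Equiv.swap_apply_left p q
  have hσq : σ q = p := Equiv.swap_apply_right p q
  have hσo : ∀ k, k ≠ p → k ≠ q → σ k = k := fun k h1 h2 => Equiv.swap_apply_of_ne_of_ne h1 h2
  have hσσ : ∀ k, σ (σ k) = k := fun k => Equiv.swap_apply_self p q k
  have hpq' : p ≠ q := ne_of_lt hpq
  rw [invCount_reindex y σ hσσ]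
  set f1 : Fin n → Fin n × Fin n := fun k => if y k < y p then (q, k) else (k, p) with hf1
  set f2 : Fin n → Fin n × Fin n := fun k => if y k < y p then (p, k) else (k, q) with hf2
  -- split S1
  have hsplit1 := Finset.card_filter_add_card_filter_not
    (s := Finset.univ.filter (fun pr : Fin n × Fin n => σ pr.1 < σ pr.2 ∧ y pr.2 < y pr.1))
    (p := fun pr : Fin n × Fin n => pr.1 < pr.2)
  have he1 : (Finset.univ.filter
      (fun pr : Fin n × Fin n => σ pr.1 < σ pr.2 ∧ y pr.2 < y pr.1)).filter
      (fun pr : Fin n × Fin n => pr.1 < pr.2) =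
      Finset.univ.filter
      (fun pr : Fin n × Fin n => pr.1 < pr.2 ∧ σ pr.1 < σ pr.2 ∧ y pr.2 < y pr.1) := by
    rw [Finset.filter_filter]
    apply Finset.filter_congr
    intro pr _
    tauto
  have he2 : (Finset.univ.filter
      (fun pr : Fin n × Fin n => σ pr.1 < σ pr.2 ∧ y pr.2 < y pr.1)).filter
      (fun pr : Fin n × Fin n => ¬ pr.1 < pr.2) =
      Finset.univ.filter
      (fun pr : Fin n × Fin n => pr.2 < pr.1 ∧ σ pr.1 < σ pr.2 ∧ y pr.2 < y pr.1) := by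
    rw [Finset.filter_filter]
    apply Finset.filter_congr
    intro pr _
    constructor
    · rintro ⟨⟨hs, hy⟩, hn⟩
      rcases lt_or_eq_of_le (not_lt.mp hn) with h | h
      · exact ⟨h, hs, hy⟩
      · exact absurd (h ▸ hy) (lt_irrefl _)
    · rintro ⟨h1, h2, h3⟩
      exact ⟨⟨h2, h3⟩, not_lt.mpr (le_of_lt h1)⟩
  -- split S2
  have hsplit2 := Finset.card_filter_add_card_filter_not
    (s := Finset.univ.filter (fun pr : Fin n × Fin n => pr.1 < pr.2 ∧ y pr.2 < y pr.1))
    (p := fun pr : Fin n × Fin n => σ pr.1 < σ pr.2)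
  have he3 : (Finset.univ.filter
      (fun pr : Fin n × Fin n => pr.1 < pr.2 ∧ y pr.2 < y pr.1)).filter
      (fun pr : Fin n × Fin n => σ pr.1 < σ pr.2) =
      Finset.univ.filter
      (fun pr : Fin n × Fin n => pr.1 < pr.2 ∧ σ pr.1 < σ pr.2 ∧ y pr.2 < y pr.1) := by
    rw [Finset.filter_filter]
    apply Finset.filter_congr
    intro pr _
    tauto
  have he4 : (Finset.univ.filter
      (fun pr : Fin n × Fin n => pr.1 < pr.2 ∧ y pr.2 < y pr.1)).filter
      (fun pr : Fin n × Fin n => ¬ σ pr.1 < σ pr.2) =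
      Finset.univ.filter
      (fun pr : Fin n × Fin n => pr.1 < pr.2 ∧ σ pr.2 < σ pr.1 ∧ y pr.2 < y pr.1) := by
    rw [Finset.filter_filter]
    apply Finset.filter_congr
    intro pr _
    constructor
    · rintro ⟨⟨hs, hy⟩, hn⟩
      rcases lt_or_eq_of_le (not_lt.mp hn) with h | h
      · exact ⟨hs, h, hy⟩
      · exact absurd (σ.injective h) (ne_of_gt hs)
    · rintro ⟨h1, h2, h3⟩
      exact ⟨⟨h1, h3⟩, not_lt.mpr (le_of_lt h2)⟩
  -- explicit descriptions of the two flip sets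
  have hE2 : Finset.univ.filter
      (fun pr : Fin n × Fin n => pr.1 < pr.2 ∧ σ pr.2 < σ pr.1 ∧ y pr.2 < y pr.1) =
      (Finset.Ioo p q).image f2 := by
    ext ⟨i, j⟩
    simp only [Finset.mem_filter, Finset.mem_univ, true_and, Finset.mem_image, Finset.mem_Ioo]
    constructor
    · rintro ⟨h1, h2, h3⟩
      by_cases hiq : i = q
      · exfalso
        have hjp : j ≠ p := fun h => absurd (h ▸ (hiq ▸ h1)) (not_lt.mpr (le_of_lt hpq))
        have hjq : j ≠ q := fun h => absurd (h ▸ h1) (by rw [hiq]; exact lt_irrefl q)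
        rw [hσo j hjp hjq, hiq, hσq] at h2
        exact absurd (lt_trans (lt_trans hpq (hiq ▸ h1)) h2) (lt_irrefl _)
      by_cases hjp : j = p
      · exfalso
        have hip : i ≠ p := fun h => absurd (h ▸ h1) (by rw [hjp]; exact lt_irrefl p)
        rw [hσo i hip hiq, hjp, hσp] at h2
        exact absurd (lt_trans (lt_trans h2 h1) (hjp ▸ hpq)) (lt_irrefl _)
      by_cases hip : i = p
      · by_cases hjq : j = q
        · rw [hip, hjq] at h3
          exact absurd h3 (not_lt.mpr (le_of_lt hval))
        · have hσj : σ j = j := hσo j hjp hjq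
          rw [hσj, hip, hσp] at h2
          rw [hip] at h1 h3
          refine ⟨j, ⟨h1, h2⟩, ?_⟩
          rw [hf2]
          simp only [if_pos h3]
          rw [hip]
      · have hσi : σ i = i := hσo i hip hiq
        by_cases hjq : j = q
        · rw [hσi, hjq, hσq] at h2
          rw [hjq] at h1 h3
          have h3' : ¬ y i < y p := not_lt.mpr (le_of_lt (lt_trans hval h3))
          refine ⟨i, ⟨h2, h1⟩, ?_⟩
          rw [hf2]
          simp only [if_neg h3']
          rw [hjq]
        · exfalso
          rw [hσi, hσo j hjp hjq] at h2
          exact absurd (lt_trans h1 h2) (lt_irrefl _)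
    · rintro ⟨k, ⟨hk1, hk2⟩, hfk⟩
      have hkp : k ≠ p := ne_of_gt hk1
      have hkq : k ≠ q := ne_of_lt hk2
      have hσk : σ k = k := hσo k hkp hkq
      by_cases hy : y k < y p
      · rw [hf2] at hfk
        simp only [if_pos hy] at hfk
        injection hfk with hi hj
        subst hi; subst hj
        exact ⟨hk1, by rw [hσk, hσp]; exact hk2, hy⟩
      · have hy2 : y q < y k := (hmid k hk1 hk2).resolve_left hy
        rw [hf2] at hfk
        simp only [if_neg hy] at hfk
        injection hfk with hi hj
        subst hi; subst hj
        exact ⟨hk2, by rw [hσk, hσq]; exact hk1, hy2⟩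
  have hE1 : Finset.univ.filter
      (fun pr : Fin n × Fin n => pr.2 < pr.1 ∧ σ pr.1 < σ pr.2 ∧ y pr.2 < y pr.1) =
      insert (q, p) ((Finset.Ioo p q).image f1) := by
    ext ⟨i, j⟩
    simp only [Finset.mem_filter, Finset.mem_univ, true_and, Finset.mem_insert,
      Finset.mem_image, Finset.mem_Ioo, Prod.mk.injEq]
    constructor
    · rintro ⟨h1, h2, h3⟩
      -- j < i  and  σ i < σ j  and  y j < y i
      by_cases hjq : j = q
      · exfalso
        have hip : i ≠ p := fun h => absurd (h ▸ (hjq ▸ h1)) (not_lt.mpr (le_of_lt hpq))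
        have hiq : i ≠ q := fun h => absurd (h ▸ h1) (by rw [hjq]; exact lt_irrefl q)
        rw [hσo i hip hiq, hjq, hσq] at h2
        exact absurd (lt_trans (lt_trans hpq (hjq ▸ h1)) h2) (lt_irrefl _)
      by_cases hip : i = p
      · exfalso
        have hjp : j ≠ p := fun h => absurd (h ▸ h1) (by rw [hip]; exact lt_irrefl p)
        rw [hσo j hjp hjq, hip, hσp] at h2
        exact absurd (lt_trans (lt_trans h2 h1) (hip ▸ hpq)) (lt_irrefl _)
      by_cases hjp : j = p
      · by_cases hiq : i = q
        · exact Or.inl ⟨hiq, hjp⟩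
        · have hσi : σ i = i := hσo i hip hiq
          rw [hσi, hjp, hσp] at h2
          rw [hjp] at h1 h3
          have h3' : ¬ y i < y p := not_lt.mpr (le_of_lt h3)
          refine Or.inr ⟨i, ⟨h1, h2⟩, ?_⟩
          rw [hf1]
          simp only [if_neg h3']
          rw [hjp]
      · have hσj : σ j = j := hσo j hjp hjq
        by_cases hiq : i = q
        · rw [hσj, hiq, hσq] at h2
          rw [hiq] at h1 h3
          have hyj : y j < y p := (hmid j h2 h1).resolve_right (not_lt.mpr (le_of_lt h3))
          refine Or.inr ⟨j, ⟨h2, h1⟩, ?_⟩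
          rw [hf1]
          simp only [if_pos hyj]
          rw [hiq]
        · exfalso
          rw [hσj, hσo i hip hiq] at h2
          exact absurd (lt_trans h1 h2) (lt_irrefl _)
    · rintro (⟨hq, hp⟩ | ⟨k, ⟨hk1, hk2⟩, hfk⟩)
      · subst hq; subst hp
        exact ⟨hpq, by rw [hσp, hσq]; exact hpq, hval⟩
      · have hkp : k ≠ p := ne_of_gt hk1
        have hkq : k ≠ q := ne_of_lt hk2
        have hσk : σ k = k := hσo k hkp hkq
        by_cases hy : y k < y p
        · rw [hf1] at hfk
          simp only [if_pos hy] at hfk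
          injection hfk with hi hj
          subst hi; subst hj
          exact ⟨hk2, by rw [hσk, hσq]; exact hk1, lt_trans hy hval⟩
        · have hy2 : y q < y k := (hmid k hk1 hk2).resolve_left hy
          rw [hf1] at hfk
          simp only [if_neg hy] at hfk
          injection hfk with hi hj
          subst hi; subst hj
          exact ⟨hk1, by rw [hσk, hσp]; exact hk2, lt_trans hval hy2⟩
  have hinj1 : Set.InjOn f1 (Finset.Ioo p q) := by
    intro a ha b hb hab
    simp only [Finset.coe_Ioo, Set.mem_Ioo] at ha hb
    rw [hf1] at hab
    by_cases hya : y a < y p <;> by_cases hyb : y b < y p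
    · simp only [if_pos hya, if_pos hyb] at hab
      injection hab
    · simp only [if_pos hya, if_neg hyb] at hab
      injection hab with h1 h2
      exact absurd (h1 ▸ hb.2) (lt_irrefl q)
    · simp only [if_neg hya, if_pos hyb] at hab
      injection hab with h1 h2
      exact absurd (h1 ▸ ha.2) (lt_irrefl q)
    · simp only [if_neg hya, if_neg hyb] at hab
      injection hab
  have hinj2 : Set.InjOn f2 (Finset.Ioo p q) := by
    intro a ha b hb hab
    simp only [Finset.coe_Ioo, Set.mem_Ioo] at ha hb
    rw [hf2] at hab
    by_cases hya : y a < y p <;> by_cases hyb : y b < y p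
    · simp only [if_pos hya, if_pos hyb] at hab
      injection hab
    · simp only [if_pos hya, if_neg hyb] at hab
      injection hab with h1 h2
      exact absurd (h1 ▸ hb.1) (lt_irrefl p)
    · simp only [if_neg hya, if_pos hyb] at hab
      injection hab with h1 h2
      exact absurd (h1 ▸ ha.1) (lt_irrefl p)
    · simp only [if_neg hya, if_neg hyb] at hab
      injection hab
  have hnm : (q, p) ∉ (Finset.Ioo p q).image f1 := by
    intro hmem
    obtain ⟨k, hk, hfk⟩ := Finset.mem_image.mp hmem
    rw [Finset.mem_Ioo] at hk
    rw [hf1] at hfk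
    by_cases hy : y k < y p
    · simp only [if_pos hy] at hfk
      injection hfk with h1 h2
      exact absurd (h2 ▸ hk.1) (lt_irrefl p)
    · simp only [if_neg hy] at hfk
      injection hfk with h1 h2
      exact absurd (h1 ▸ hk.2) (lt_irrefl q)
  rw [he1, he2] at hsplit1
  rw [he3, he4] at hsplit2
  have hcard1 : (Finset.univ.filter
      (fun pr : Fin n × Fin n => pr.2 < pr.1 ∧ σ pr.1 < σ pr.2 ∧ y pr.2 < y pr.1)).card =
      (Finset.Ioo p q).card + 1 := by
    rw [hE1, Finset.card_insert_of_notMem hnm, Finset.card_image_of_injOn hinj1]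
  have hcard2 : (Finset.univ.filter
      (fun pr : Fin n × Fin n => pr.1 < pr.2 ∧ σ pr.2 < σ pr.1 ∧ y pr.2 < y pr.1)).card =
      (Finset.Ioo p q).card := by
    rw [hE2, Finset.card_image_of_injOn hinj2]
  have hy2 : invCount ⇑y = (Finset.univ.filter
      (fun pr : Fin n × Fin n => pr.1 < pr.2 ∧ y pr.2 < y pr.1)).card := rfl
  omega

lemma key_step {n : ℕ} (x y : Equiv.Perm (Fin n)) (hC : Cnd ⇑x ⇑y) (hne : x ≠ y) :
    ∃ z : Equiv.Perm (Fin n), Cnd ⇑x ⇑z ∧ Cnd ⇑z ⇑y ∧ invCount ⇑z = invCount ⇑y + 1 := by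
  classical
  -- q : the largest position where x and y differ
  have hDne : (Finset.univ.filter (fun k : Fin n => x k ≠ y k)).Nonempty := by
    by_contra hD
    apply hne
    ext k
    by_contra hk
    exact hD ⟨k, Finset.mem_filter.mpr ⟨Finset.mem_univ k,
      fun h => hk (by rw [h])⟩⟩
  set q := (Finset.univ.filter (fun k : Fin n => x k ≠ y k)).max' hDne with hqdef
  have hqD := (Finset.univ.filter (fun k : Fin n => x k ≠ y k)).max'_mem hDne
  have hq : x q ≠ y q := (Finset.mem_filter.mp hqD).2
  have hqmax : ∀ k, q < k → x k = y k := by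
    intro k hk
    by_contra hk'
    exact absurd ((Finset.univ.filter (fun k : Fin n => x k ≠ y k)).le_max' k
      (Finset.mem_filter.mpr ⟨Finset.mem_univ k, hk'⟩)) (not_le.mpr hk)
  have hxq : x q < y q := by
    rcases lt_or_gt_of_ne hq with h | h
    · exact h
    · exfalso
      obtain ⟨m, hm, hym⟩ := hC q (x q) h le_rfl
      have hxm : x m = y m := hqmax m hm
      have : m = q := x.injective (by rw [hxm, hym])
      exact absurd (this ▸ hm) (lt_irrefl q)
  -- p : the position before q with y p maximal among y p < y q
  have hPne : (Finset.univ.filter (fun k : Fin n => k < q ∧ y k < y q)).Nonempty := by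
    refine ⟨y.symm (x q), Finset.mem_filter.mpr ⟨Finset.mem_univ _, ?_, ?_⟩⟩
    · have hym0 : y (y.symm (x q)) = x q := y.apply_symm_apply _
      rcases lt_trichotomy (y.symm (x q)) q with h | h | h
      · exact h
      · exfalso; exact hq (by rw [← hym0, h])
      · exfalso
        have hxm : x (y.symm (x q)) = y (y.symm (x q)) := hqmax _ h
        have heq : y.symm (x q) = q := x.injective (by rw [hxm, hym0])
        rw [heq] at h
        exact absurd h (lt_irrefl q)
    · rw [y.apply_symm_apply]; exact hxq
  obtain ⟨p, hpP, hpmax⟩ := (Finset.univ.filter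
    (fun k : Fin n => k < q ∧ y k < y q)).exists_max_image (fun k => y k) hPne
  have hpq : p < q := (Finset.mem_filter.mp hpP).2.1
  have hup : y p < y q := (Finset.mem_filter.mp hpP).2.2
  have hmax : ∀ k, k < q → y k < y q → y k ≤ y p := fun k h1 h2 =>
    hpmax k (Finset.mem_filter.mpr ⟨Finset.mem_univ k, h1, h2⟩)
  have hmid0 : ∀ k, p < k → k < q → y k < y q → y k < y p := by
    intro k h1 h2 h3
    rcases lt_or_eq_of_le (hmax k h2 h3) with h | h
    · exact h
    · exact absurd (y.injective h) (ne_of_gt h1)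
  have hmid : ∀ k, p < k → k < q → y k < y p ∨ y q < y k := by
    intro k h1 h2
    rcases lt_trichotomy (y k) (y q) with h | h | h
    · exact Or.inl (hmid0 k h1 h2 h)
    · exact absurd (y.injective h) (ne_of_lt h2)
    · exact Or.inr h
  set z : Equiv.Perm (Fin n) := y * Equiv.swap p q with hzdef
  have hzp : z p = y q := by
    show y (Equiv.swap p q p) = y q
    rw [Equiv.swap_apply_left]
  have hzq : z q = y p := by
    show y (Equiv.swap p q q) = y p
    rw [Equiv.swap_apply_right]
  have hzo : ∀ k, k ≠ p → k ≠ q → z k = y k := by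
    intro k h1 h2
    show y (Equiv.swap p q k) = y k
    rw [Equiv.swap_apply_of_ne_of_ne h1 h2]
  refine ⟨z, ?_, ?_, invCount_swap y p q hpq hup hmid⟩
  · -- Cnd x z
    intro k t h1 h2
    by_cases hkq : k = q
    · -- z q = y p < t ≤ x q < y q
      rw [hkq, hzq] at h1
      rw [hkq] at h2
      have htv : t < y q := lt_of_le_of_lt h2 hxq
      have hym : y (y.symm t) = t := y.apply_symm_apply t
      have hmp : y.symm t ≠ p := by
        intro h
        rw [h] at hym
        exact absurd (hym ▸ h1) (lt_irrefl _)
      have hmq : y.symm t ≠ q := by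
        intro h
        rw [h] at hym
        exact absurd (hym ▸ htv) (lt_irrefl _)
      have hmgt : q < y.symm t := by
        rcases lt_trichotomy (y.symm t) q with h | h | h
        · exfalso
          have := hmax (y.symm t) h (by rw [hym]; exact htv)
          rw [hym] at this
          exact absurd (lt_of_lt_of_le h1 this) (lt_irrefl _)
        · exact absurd h hmq
        · exact h
      exact ⟨y.symm t, hkq ▸ hmgt, by rw [hzo _ hmp hmq, hym]⟩
    by_cases hkp : k = p
    · -- z p = y q < t ≤ x p
      rw [hkp, hzp] at h1
      rw [hkp] at h2
      obtain ⟨m, hm, hym⟩ := hC p t (lt_trans hup h1) h2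
      have hmq : m ≠ q := by
        intro h
        rw [h] at hym
        exact absurd (hym ▸ h1) (lt_irrefl _)
      have hmp : m ≠ p := ne_of_gt hm
      exact ⟨m, hkp ▸ hm, by rw [hzo m hmp hmq, hym]⟩
    have hzk : z k = y k := hzo k hkp hkq
    rw [hzk] at h1
    rcases lt_trichotomy k p with hkp' | h | hkp'
    · -- k < p
      obtain ⟨m, hm, hym⟩ := hC k t h1 h2
      by_cases hmp : m = p
      · exact ⟨q, lt_trans hkp' hpq, by rw [hzq, ← hym, hmp]⟩
      by_cases hmq : m = q
      · exact ⟨p, hkp', by rw [hzp, ← hym, hmq]⟩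
      · exact ⟨m, hm, by rw [hzo m hmp hmq, hym]⟩
    · exact absurd h hkp
    · -- p < k ; must have k < q
      have hkq' : k < q := by
        rcases lt_trichotomy k q with h | h | h
        · exact h
        · exact absurd h hkq
        · exfalso
          rw [hqmax k h] at h2
          exact absurd (lt_of_lt_of_le h1 h2) (lt_irrefl _)
      have htq : t ≠ y q := by
        intro h
        have hyk : y k < y p := hmid0 k hkp' hkq' (h ▸ h1)
        have hup2 : y p ≤ x k := le_of_lt (lt_of_lt_of_le hup (h ▸ h2))
        obtain ⟨m, hm, hym⟩ := hC k (y p) hyk hup2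
        have : m = p := y.injective hym
        exact absurd (this ▸ hm) (not_lt.mpr (le_of_lt hkp'))
      obtain ⟨m, hm, hym⟩ := hC k t h1 h2
      have hmq : m ≠ q := fun h => htq (by rw [← hym, h])
      have hmp : m ≠ p := ne_of_gt (lt_trans hkp' hm)
      exact ⟨m, hm, by rw [hzo m hmp hmq, hym]⟩
  · -- Cnd z y
    intro k t h1 h2
    by_cases hkq : k = q
    · rw [hkq, hzq] at h2
      rw [hkq] at h1
      exact absurd (lt_of_lt_of_le h1 (le_of_lt (lt_of_le_of_lt h2 hup))) (lt_irrefl _)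
    by_cases hkp : k = p
    · rw [hkp, hzp] at h2
      rw [hkp] at h1
      by_cases htq : t = y q
      · exact ⟨q, hkp ▸ hpq, htq.symm⟩
      · have htv : t < y q := lt_of_le_of_ne h2 htq
        have hym : y (y.symm t) = t := y.apply_symm_apply t
        have hmp : y.symm t ≠ p := by
          intro h
          rw [h] at hym
          exact absurd (hym ▸ h1) (lt_irrefl _)
        have hmgt : q < y.symm t := by
          rcases lt_trichotomy (y.symm t) q with h | h | h
          · exfalso
            have := hmax (y.symm t) h (by rw [hym]; exact htv)
            rw [hym] at this
            exact absurd (lt_of_lt_of_le h1 this) (lt_irrefl _)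
          · exfalso; rw [h] at hym; exact htq hym.symm
          · exact h
        exact ⟨y.symm t, hkp ▸ lt_trans hpq hmgt, hym⟩
    · rw [hzo k hkp hkq] at h2
      exact absurd (lt_of_lt_of_le h1 h2) (lt_irrefl _)

lemma rtg_last {α : Type*} {r : α → α → Prop} {x y : α}
    (h : Relation.ReflTransGen r x y) :
    x = y ∨ ∃ w, Relation.ReflTransGen r x w ∧ w ≠ y ∧ r w y := by
  induction h with
  | refl => exact Or.inl rfl
  | @tail b c hxb hbc ih =>
    by_cases h1 : b = c
    · subst h1; exact ih
    · exact Or.inr ⟨b, hxb, h1, hbc⟩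

/-- Theorem `pseudoreachable-graded`. Pseudoreachability is graded
by length: if `x` covers `y` in the pseudoreachability order then `ℓ(x) = ℓ(y) + 1`. -/
theorem stmt12 {n : ℕ} (x y : Equiv.Perm (Fin n)) (hxy : PseudoGE x y) (hne : x ≠ y)
    (hcov : ∀ z : Equiv.Perm (Fin n),
      PseudoGE x z → x ≠ z → PseudoGE z y → z ≠ y → False) :
    invCount ⇑x = invCount ⇑y + 1 := by
  classical
  rcases rtg_last hxy with rfl | ⟨w, hxw, hwy, hR⟩
  · exact absurd rfl hne
  · have hC : Cnd ⇑w ⇑y := C_of_reaches hR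
    obtain ⟨z, hCxz, hCzy, hinv⟩ := key_step w y hC hwy
    have hRwz : Reaches ⇑w ⇑z := reaches_of_C w.injective z.injective hCxz
    have hRzy : Reaches ⇑z ⇑y := reaches_of_C z.injective y.injective hCzy
    have hPxz : PseudoGE x z := hxw.tail hRwz
    have hPzy : PseudoGE z y := Relation.ReflTransGen.single hRzy
    have hzy : z ≠ y := by
      intro h
      rw [h] at hinv
      omega
    by_cases hxz : x = z
    · rw [hxz]; exact hinv
    · exact (hcov z hPxz hxz hPzy hzy).elim
end

section
/- Let x, y be permutations of [n] with x(n) = y(n) = n, and let v = s_j s_{j+1} ⋯ s_{n−1} for some j ∈ [n−1]. Then x ⊵_R y if and only if v·x ⊵_R v·y. -/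
lemma aoutcome_unique_s13 {n : ℕ} {a o o' : Fin n → Fin n}
    (h : IsAOutcome a o) (h' : IsAOutcome a o') : o = o' := by
  obtain ⟨ho, H⟩ := h
  obtain ⟨ho', H'⟩ := h'
  suffices hm : ∀ m : ℕ, ∀ i : Fin n, i.val = m → o i = o' i by
    funext i; exact hm i.val i rfl
  intro m
  induction m using Nat.strong_induction_on with
  | _ m IH =>
    intro i him
    by_contra hne
    rcases lt_or_gt_of_ne hne with hlt | hgt
    · obtain ⟨k, hk, hok⟩ := (H' i).2 (o i) (H i).1 hlt
      have hkk : o k = o' k := IH k.val (by simpa [Fin.lt_def, him] using hk) k rfl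
      exact absurd (ho (hkk.trans hok)) (Fin.ne_of_lt hk)
    · obtain ⟨k, hk, hok⟩ := (H i).2 (o' i) (H' i).1 hgt
      have hkk : o k = o' k := IH k.val (by simpa [Fin.lt_def, him] using hk) k rfl
      exact absurd (ho' ((hkk.symm.trans hok))) (Fin.ne_of_lt hk)

lemma reaches_iff {n : ℕ} (x y : Equiv.Perm (Fin n)) :
    Reaches ⇑x ⇑y ↔ ∀ i u : Fin n, y i < u → u ≤ x i → ∃ k, i < k ∧ y k = u := by
  constructor
  · rintro ⟨a, b, ⟨o, hoinj, hB⟩, hax, hby⟩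
    have hoa : IsAOutcome a o := ⟨hoinj, fun i => ⟨(hB i).1, (hB i).2.2⟩⟩
    have hox : o = ⇑x := aoutcome_unique_s13 hoa hax
    intro i u hyu hux
    have hxb : x i ≤ b i := hox ▸ (hB i).2.1
    obtain ⟨hYinj, hY⟩ := hby
    have h1 : pconj b i.rev ≤ u.rev := by
      show (b i.rev.rev).rev ≤ u.rev
      rw [Fin.rev_rev, Fin.rev_le_rev]
      exact le_trans hux hxb
    have h2 : u.rev < pconj y i.rev := by
      show u.rev < (y i.rev.rev).rev
      rw [Fin.rev_rev, Fin.rev_lt_rev]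
      exact hyu
    obtain ⟨k, hk, hku⟩ := (hY i.rev).2 u.rev h1 h2
    refine ⟨k.rev, ?_, ?_⟩
    · have hk' : k.val < i.rev.val := hk
      have h3 := k.isLt; have h4 := i.isLt
      simp only [Fin.lt_def, Fin.val_rev] at hk' ⊢
      omega
    · have : (y k.rev).rev = u.rev := hku
      exact Fin.rev_inj.mp this
  · intro hR
    refine ⟨⇑x, fun i => max (x i) (y i),
      ⟨⇑x, x.injective, fun i => ⟨le_refl _, le_max_left _ _,
        fun s hs hs' => absurd hs (not_le.mpr hs')⟩⟩,
      ⟨x.injective, fun i => ⟨le_refl _, fun s hs hs' => absurd hs (not_le.mpr hs')⟩⟩, ?_⟩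
    constructor
    · intro i k hik
      have h1 : (y i.rev).rev = (y k.rev).rev := hik
      exact Fin.rev_inj.mp (y.injective (Fin.rev_inj.mp h1))
    · intro i
      constructor
      · show (max (x i.rev) (y i.rev)).rev ≤ (y i.rev).rev
        rw [Fin.rev_le_rev]; exact le_max_right _ _
      · intro s hs1 hs2
        simp only [pconj] at hs1 hs2
        have hs2' : y i.rev < s.rev := by
          rw [← Fin.rev_rev s, Fin.rev_lt_rev] at hs2; exact hs2
        have hs1' : s.rev ≤ max (x i.rev) (y i.rev) := by
          have h5 : (max (x i.rev) (y i.rev)).rev ≤ s.rev.rev := by rw [Fin.rev_rev]; exact hs1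
          rw [Fin.rev_le_rev] at h5; exact h5
        have hux : s.rev ≤ x i.rev := by
          rcases le_max_iff.mp hs1' with h | h
          · exact h
          · exact absurd h (not_le.mpr hs2')
        obtain ⟨k, hik, hk⟩ := hR i.rev s.rev hs2' hux
        refine ⟨k.rev, ?_, ?_⟩
        · have hik' : i.rev.val < k.val := hik
          have h3 := k.isLt; have h4 := i.isLt
          simp only [Fin.lt_def, Fin.val_rev] at hik' ⊢
          omega
        · show (y k.rev.rev).rev = s
          rw [Fin.rev_rev, hk, Fin.rev_rev]

lemma prodIco_apply {n : ℕ} : ∀ (m j : ℕ), n - j = m → 1 ≤ j → j ≤ n → ∀ a : Fin n,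
    ((((List.Ico j n).map (sgen n)).prod) a).val =
      if a.val = n - 1 then j - 1 else if j - 1 ≤ a.val then a.val + 1 else a.val := by
  intro m
  induction m with
  | zero =>
    intro j hm hj1 hj2 a
    have hjn : j = n := by omega
    subst hjn
    have han := a.isLt
    simp only [List.Ico.self_empty, List.map_nil, List.prod_nil, Equiv.Perm.one_apply]
    split_ifs <;> omega
  | succ m IH =>
    intro j hm hj1 hj2 a
    have hjn : j < n := by omega
    rw [List.Ico.eq_cons hjn]
    simp only [List.map_cons, List.prod_cons, Equiv.Perm.mul_apply]
    have hIH := IH (j + 1) (by omega) (by omega) (by omega) a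
    set b := (((List.Ico (j + 1) n).map (sgen n)).prod) a with hb
    rw [sgen, dif_pos ⟨hj1, hjn⟩, Equiv.swap_apply_def]
    have hbn := b.isLt
    have han := a.isLt
    simp only [Fin.ext_iff, apply_ite Fin.val]
    split_ifs at hIH ⊢ <;> omega

/-- Prop. `v-reduction`. Let `x(n) = y(n) = n` and
`v = s_j s_{j+1} ⋯ s_{n-1}` for `j ∈ [n-1]`. Then `x ⊵_R y` iff `v·x ⊵_R v·y`. -/
theorem stmt13 {n : ℕ} (hn : 2 ≤ n) (x y : Equiv.Perm (Fin n))
    (hx : x ⟨n - 1, by omega⟩ = ⟨n - 1, by omega⟩)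
    (hy : y ⟨n - 1, by omega⟩ = ⟨n - 1, by omega⟩)
    (j : ℕ) (hj1 : 1 ≤ j) (hj2 : j ≤ n - 1) :
    Reaches ⇑x ⇑y ↔
      Reaches ⇑(((List.Ico j n).map (sgen n)).prod * x)
        ⇑(((List.Ico j n).map (sgen n)).prod * y) := by
  have hn1 : n - 1 < n := by omega
  set v := ((List.Ico j n).map (sgen n)).prod with hv
  have hV : ∀ a : Fin n, (v a).val =
      if a.val = n - 1 then j - 1 else if j - 1 ≤ a.val then a.val + 1 else a.val :=
    fun a => prodIco_apply (n - j) j rfl hj1 (by omega) a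
  have hxv : ∀ i : Fin n, i.val ≠ n - 1 → (x i).val ≠ n - 1 := by
    intro i hi hxi
    have h5 : i = ⟨n - 1, hn1⟩ := x.injective (by rw [hx]; exact Fin.ext hxi)
    exact hi (congrArg Fin.val h5)
  have hyv : ∀ i : Fin n, i.val ≠ n - 1 → (y i).val ≠ n - 1 := by
    intro i hi hyi
    have h5 : i = ⟨n - 1, hn1⟩ := y.injective (by rw [hy]; exact Fin.ext hyi)
    exact hi (congrArg Fin.val h5)
  rw [reaches_iff, reaches_iff]
  simp only [Equiv.Perm.coe_mul, Function.comp_apply]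
  constructor
  · intro h i u h1 h2
    have h1' : (v (y i)).val < u.val := h1
    have h2' : u.val ≤ (v (x i)).val := h2
    have hiv := i.isLt; have huv := u.isLt
    have hyi := (y i).isLt; have hxi := (x i).isLt
    have ey := hV (y i); have ex := hV (x i)
    by_cases hi : i.val = n - 1
    · exfalso
      have hie : i = ⟨n - 1, hn1⟩ := Fin.ext hi
      have hyn : (y i).val = n - 1 := by rw [hie, hy]
      have hxn : (x i).val = n - 1 := by rw [hie, hx]
      rw [if_pos hyn] at ey; rw [if_pos hxn] at ex
      omega
    · have hyn := hyv i hi; have hxn := hxv i hi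
      rw [if_neg hyn] at ey; rw [if_neg hxn] at ex
      by_cases hu : u.val = j - 1
      · refine ⟨⟨n - 1, hn1⟩, ?_, ?_⟩
        · simp only [Fin.lt_def]; omega
        · apply Fin.ext
          rw [hy]
          have := hV ⟨n - 1, hn1⟩
          rw [if_pos rfl] at this
          omega
      · set w := v.symm u with hw
        have vw : v w = u := v.apply_symm_apply u
        have ew := hV w
        have hwvu : (v w).val = u.val := congrArg Fin.val vw
        have hwn : w.val ≠ n - 1 := by
          intro hwe
          rw [if_pos hwe] at ew; omega
        rw [if_neg hwn] at ew
        have hww := w.isLt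
        obtain ⟨k, hik, hk⟩ := h i w (by rw [Fin.lt_def]; split_ifs at ey ew <;> omega)
          (by rw [Fin.le_def]; split_ifs at ey ew ex <;> omega)
        exact ⟨k, hik, by rw [hk, vw]⟩
  · intro h i u h1 h2
    have h1' : (y i).val < u.val := h1
    have h2' : u.val ≤ (x i).val := h2
    have hiv := i.isLt; have huv := u.isLt
    have hyi := (y i).isLt; have hxi := (x i).isLt
    have hi : i.val ≠ n - 1 := by
      intro hie
      have hyn : (y i).val = n - 1 := by rw [Fin.ext hie (a := i) (b := ⟨n - 1, hn1⟩), hy]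
      omega
    have hyn := hyv i hi; have hxn := hxv i hi
    have hun : u.val ≠ n - 1 := by omega
    have ey := hV (y i); have ex := hV (x i); have eu := hV u
    rw [if_neg hyn] at ey; rw [if_neg hxn] at ex; rw [if_neg hun] at eu
    obtain ⟨k, hik, hk⟩ := h i (v u)
      (by rw [Fin.lt_def]; split_ifs at ey eu <;> omega)
      (by rw [Fin.le_def]; split_ifs at ex eu <;> omega)
    exact ⟨k, hik, v.injective hk⟩
end

section
/- The pseudoreachability order coincides with the bubble-sorting order on S_n: for all permutations x, y of [n], x ≥_P y if and only if λ_k(x) ≥ λ_k(y) for every k ∈ [n−1]. -/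
section Aux

open Finset

variable {n : ℕ}

/-- The inversion-table statistic: number of `j < k` with `x j > x k`. -/
def Lstat (x : Fin n → Fin n) (k : Fin n) : ℕ :=
  (Finset.univ.filter fun j : Fin n => j < k ∧ x k < x j).card

/-- The clean characterization of one reachability step. -/
def Rr (x y : Fin n → Fin n) : Prop :=
  ∀ i v j : Fin n, y i < v → v ≤ x i → y j = v → i < j

lemma pconj_pconj (f : Fin n → Fin n) : pconj (pconj f) = f := by
  funext i; simp [pconj, Fin.rev_rev]

lemma pconj_injective {f : Fin n → Fin n} (hf : Function.Injective f) :
    Function.Injective (pconj f) := by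
  intro i j h
  simp only [pconj] at h
  have := hf (Fin.rev_injective h)
  exact Fin.rev_injective this

/-- The B-outcome coincides with the A-outcome. -/
lemma outcome_unique {a b o x : Fin n → Fin n} (hB : IsBOutcome a b o)
    (hA : IsAOutcome a x) : o = x := by
  obtain ⟨ho, hB⟩ := hB
  obtain ⟨hx, hA⟩ := hA
  by_contra hne
  have hne' : ∃ i : Fin n, o i ≠ x i := by
    by_contra h; push_neg at h; exact hne (funext h)
  classical
  set T : Finset (Fin n) := Finset.univ.filter (fun i => o i ≠ x i) with hT
  have hTne : T.Nonempty := by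
    obtain ⟨i, hi⟩ := hne'
    exact ⟨i, by simp [hT, hi]⟩
  set i := T.min' hTne with hi
  have hiT : i ∈ T := T.min'_mem hTne
  have himem : o i ≠ x i := by simpa [hT] using hiT
  have hmin : ∀ j, j < i → o j = x j := by
    intro j hj
    by_contra hc
    have : j ∈ T := by simp [hT, hc]
    exact absurd (T.min'_le j this) (not_le.mpr hj)
  rcases lt_or_gt_of_ne himem with hlt | hgt
  · -- o i < x i : spot o i is taken by earlier car in x, say x j = o i
    obtain ⟨j, hji, hxj⟩ := (hA i).2 (o i) (hB i).1 hlt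
    have : o j = o i := by rw [hmin j hji, hxj]
    exact absurd (ho this) (ne_of_lt hji)
  · obtain ⟨j, hji, hoj⟩ := (hB i).2.2 (x i) (hA i).1 hgt
    have : x j = x i := by rw [← hmin j hji, hoj]
    exact absurd (hx this) (ne_of_lt hji)


lemma reaches_iff_s14 (x y : Equiv.Perm (Fin n)) : Reaches ⇑x ⇑y ↔ Rr ⇑x ⇑y := by
  constructor
  · rintro ⟨a, b, ⟨o, hBo⟩, hAx, hAy⟩
    have ho : o = ⇑x := outcome_unique hBo hAx
    have hxb : ∀ i, x i ≤ b i := fun i => by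
      have := (hBo.2 i).2.1; rwa [ho] at this
    intro i v j h1 h2 h3
    have hb : pconj b i.rev ≤ v.rev := by
      have : v ≤ b i := le_trans h2 (hxb i)
      simpa [pconj, Fin.rev_rev] using (Fin.rev_le_rev.mpr this)
    have hy : v.rev < pconj (⇑y) i.rev := by
      simpa [pconj, Fin.rev_rev] using (Fin.rev_lt_rev.mpr h1)
    obtain ⟨j', hj', hyj'⟩ := (hAy.2 i.rev).2 v.rev hb hy
    have hj'' : y j'.rev = v := by
      have : (y j'.rev).rev = v.rev := hyj'
      exact Fin.rev_injective this
    have : j'.rev = j := y.injective (by rw [hj'', h3])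
    rw [← this] at *
    exact Fin.rev_lt_rev.mp (by simpa [Fin.rev_rev] using hj')
  · intro hR
    classical
    set c : Fin n → Fin n := fun i => min (pconj ⇑x i) (pconj ⇑y i) with hc
    have hcy : IsAOutcome c (pconj ⇑y) := by
      refine ⟨pconj_injective y.injective, fun i => ⟨min_le_right _ _, ?_⟩⟩
      intro s h1 h2
      have hz : pconj ⇑x i ≤ s := by
        by_contra h
        push_neg at h
        exact absurd h1 (not_le.mpr (lt_min h h2))
      have h2' : y i.rev < s.rev := by
        have : s < (y i.rev).rev := by simpa [pconj] using h2
        simpa [Fin.rev_rev] using Fin.rev_lt_rev.mpr this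
      have hz' : s.rev ≤ x i.rev := by
        have : (x i.rev).rev ≤ s := by simpa [pconj] using hz
        simpa [Fin.rev_rev] using Fin.rev_le_rev.mpr this
      have hlt : i.rev < y.symm s.rev :=
        hR i.rev s.rev (y.symm s.rev) h2' hz' (y.apply_symm_apply _)
      refine ⟨(y.symm s.rev).rev, ?_, ?_⟩
      · simpa [Fin.rev_rev] using Fin.rev_lt_rev.mpr hlt
      · simp [pconj, Fin.rev_rev]
    refine ⟨⇑x, pconj c, ⟨⇑x, x.injective, fun i => ⟨le_refl _, ?_, ?_⟩⟩, ?_, ?_⟩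
    · -- x i ≤ pconj c i
      have hmax : pconj c i = max (x i) (y i) := by
        simp only [pconj, hc, Fin.rev_rev]
        rcases le_total (x i) (y i) with h | h
        · rw [min_eq_right (Fin.rev_le_rev.mpr h), Fin.rev_rev, max_eq_right h]
        · rw [min_eq_left (Fin.rev_le_rev.mpr h), Fin.rev_rev, max_eq_left h]
      rw [hmax]
      exact le_max_left _ _
    · intro s hs hs'
      exact absurd (lt_of_le_of_lt hs hs') (lt_irrefl _)
    · exact ⟨x.injective, fun i => ⟨le_refl _, fun s hs hs' =>
        absurd (lt_of_le_of_lt hs hs') (lt_irrefl _)⟩⟩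
    · rw [pconj_pconj]
      exact hcy


lemma hatf_val (x : Fin (n+1) → Fin (n+1)) (i : Fin n) :
    (hatf x i).val = if (x i.castSucc).val < (x (Fin.last n)).val
      then (x i.castSucc).val else (x i.castSucc).val - 1 := by
  simp only [hatf]; split_ifs <;> rfl

lemma ne_last_val {x : Fin (n+1) → Fin (n+1)} (hx : Function.Injective x) (i : Fin n) :
    (x i.castSucc).val ≠ (x (Fin.last n)).val := by
  intro h
  exact (Fin.castSucc_lt_last i).ne (hx (Fin.ext h))

lemma hatf_injective {x : Fin (n+1) → Fin (n+1)} (hx : Function.Injective x) :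
    Function.Injective (hatf x) := by
  intro i j h
  have hi := ne_last_val hx i
  have hj := ne_last_val hx j
  have hval : (hatf x i).val = (hatf x j).val := congrArg Fin.val h
  rw [hatf_val, hatf_val] at hval
  have : (x i.castSucc).val = (x j.castSucc).val := by
    split_ifs at hval <;> omega
  exact Fin.castSucc_injective n (hx (Fin.ext this))

lemma hatf_lt_iff {x : Fin (n+1) → Fin (n+1)} (hx : Function.Injective x) (i j : Fin n) :
    hatf x i < hatf x j ↔ x i.castSucc < x j.castSucc := by
  have hi := ne_last_val hx i
  have hj := ne_last_val hx j
  rw [Fin.lt_def, Fin.lt_def, hatf_val, hatf_val]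
  split_ifs <;> omega

lemma Lstat_last {x : Fin (n+1) → Fin (n+1)} (hx : Function.Injective x) :
    Lstat x (Fin.last n) = n - (x (Fin.last n)).val := by
  classical
  unfold Lstat
  have h1 : (Finset.univ.filter fun j : Fin (n+1) =>
      j < Fin.last n ∧ x (Fin.last n) < x j)
      = Finset.univ.filter fun j => x (Fin.last n) < x j := by
    apply Finset.filter_congr
    intro j _
    constructor
    · exact fun h => h.2
    · intro h
      refine ⟨?_, h⟩
      rcases Fin.lt_or_eq_of_le (Fin.le_last j) with h' | h'
      · exact h'
      · exact absurd h (by rw [h']; exact lt_irrefl _)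
  rw [h1]
  have h2 : (Finset.univ.filter fun j : Fin (n+1) => x (Fin.last n) < x j).card
      = (Finset.univ.filter fun v : Fin (n+1) => x (Fin.last n) < v).card := by
    apply Finset.card_bij (fun j _ => x j)
    · intro a ha
      simp only [Finset.mem_filter, Finset.mem_univ, true_and] at ha ⊢
      exact ha
    · intro a _ b _ h
      exact hx h
    · intro v hv
      simp only [Finset.mem_filter, Finset.mem_univ, true_and] at hv
      obtain ⟨j, hj⟩ := (Finite.injective_iff_surjective.mp hx) v
      exact ⟨j, by simp [Finset.mem_filter, hj, hv], hj⟩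
  rw [h2]
  rw [Finset.filter_lt_eq_Ioi, Fin.card_Ioi]
  omega

lemma Rr_last_le {x y : Fin (n+1) → Fin (n+1)} (hy : Function.Surjective y)
    (h : Rr x y) : x (Fin.last n) ≤ y (Fin.last n) := by
  by_contra hc
  push_neg at hc
  obtain ⟨j, hj⟩ := hy (x (Fin.last n))
  exact absurd (h (Fin.last n) (x (Fin.last n)) j hc le_rfl hj)
    (not_lt.mpr (Fin.le_last j))

lemma Rr_hatf {x y : Fin (n+1) → Fin (n+1)} (hx : Function.Injective x)
    (hy : Function.Injective y) (hle : x (Fin.last n) ≤ y (Fin.last n))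
    (h : Rr x y) : Rr (hatf x) (hatf y) := by
  intro i v j h1 h2 h3
  subst h3
  have hyi := ne_last_val hy i
  have hyj := ne_last_val hy j
  have hxi := ne_last_val hx i
  have hlev : (x (Fin.last n)).val ≤ (y (Fin.last n)).val := hle
  have key1 : (y i.castSucc).val < (y j.castSucc).val := by
    have h1' : (hatf y i).val < (hatf y j).val := h1
    rw [hatf_val, hatf_val] at h1'
    split_ifs at h1' <;> omega
  have key2 : (y j.castSucc).val ≤ (x i.castSucc).val := by
    have h2' : (hatf y j).val ≤ (hatf x i).val := h2
    rw [hatf_val, hatf_val] at h2'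
    split_ifs at h2' <;> omega
  have := h i.castSucc (y j.castSucc) j.castSucc (Fin.lt_def.mpr key1)
    (Fin.le_def.mpr key2) rfl
  exact Fin.castSucc_lt_castSucc_iff.mp this

lemma Lstat_castSucc {x : Fin (n+1) → Fin (n+1)} (hx : Function.Injective x) (k : Fin n) :
    Lstat x k.castSucc = Lstat (hatf x) k := by
  classical
  unfold Lstat
  apply Finset.card_bij (fun (j : Fin (n+1)) (hj : j ∈ _) =>
    (⟨j.val, by
      have := (Finset.mem_filter.mp hj).2.1
      have h2 := k.isLt
      have h3 : j.val < k.val := this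
      omega⟩ : Fin n))
  · intro a ha
    simp only [Finset.mem_filter, Finset.mem_univ, true_and] at ha ⊢
    obtain ⟨ha1, ha2⟩ := ha
    have hcs : (⟨a.val, by have := ha1; have h3 : a.val < k.val := this; omega⟩ :
        Fin n).castSucc = a := by
      apply Fin.ext; simp
    constructor
    · exact ha1
    · rw [hatf_lt_iff hx]
      rw [hcs]
      exact ha2
  · intro a ha b hb hab
    have : a.val = b.val := by
      have := congrArg Fin.val hab
      simpa using this
    exact Fin.ext this
  · intro b hb
    simp only [Finset.mem_filter, Finset.mem_univ, true_and] at hb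
    obtain ⟨hb1, hb2⟩ := hb
    refine ⟨b.castSucc, ?_, ?_⟩
    · simp only [Finset.mem_filter, Finset.mem_univ, true_and]
      constructor
      · exact Fin.castSucc_lt_castSucc_iff.mpr hb1
      · rw [← hatf_lt_iff hx]
        exact hb2
    · apply Fin.ext; simp
  
lemma rr_lstat_le : ∀ (n : ℕ) (x y : Fin n → Fin n), Function.Injective x →
    Function.Injective y → Rr x y → ∀ k, Lstat y k ≤ Lstat x k := by
  intro n
  induction n with
  | zero => intro x y _ _ _ k; exact k.elim0
  | succ n ih =>
    intro x y hx hy hR k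
    have hsy : Function.Surjective y := Finite.injective_iff_surjective.mp hy
    have hle := Rr_last_le hsy hR
    by_cases hk : k = Fin.last n
    · subst hk
      rw [Lstat_last hx, Lstat_last hy]
      have h1 : (x (Fin.last n)).val ≤ (y (Fin.last n)).val := hle
      omega
    · have hklt : k.val < n := by
        have h1 := k.isLt
        have h2 : k.val ≠ n := fun h => hk (Fin.ext (by simp [h]))
        omega
      have hkc : (⟨k.val, hklt⟩ : Fin n).castSucc = k := Fin.ext rfl
      rw [← hkc, Lstat_castSucc hx, Lstat_castSucc hy]
      exact ih _ _ (hatf_injective hx) (hatf_injective hy) (Rr_hatf hx hy hle hR) _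


lemma lam_congr : ∀ (m : ℕ) (f g : ℕ → ℕ), (∀ i, i ≤ m → f i = g i) →
    ∀ k, lam m f k = lam m g k := by
  intro m
  induction m with
  | zero => intros; rfl
  | succ m ih =>
    intro f g h k
    by_cases hk : k = m
    · simp only [lam, if_pos hk, h (m+1) le_rfl]
    · simp only [lam, if_neg hk]
      apply ih
      intro i hi
      rw [h i (by omega), h (m+1) le_rfl]

lemma lam_eq : ∀ (n : ℕ) (x : Fin n → Fin n), Function.Injective x →
    ∀ (k : ℕ), 1 ≤ k → ∀ (h2 : k < n), lam n (oneline x) k = Lstat x ⟨k, h2⟩ := by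
  intro n
  induction n with
  | zero => intro x _ k _ h2; omega
  | succ n ih =>
    intro x hx k h1 h2
    have hol_last : oneline x (n+1) = (x (Fin.last n)).val + 1 := by
      have h5 : n + 1 - 1 < n + 1 := by omega
      simp only [oneline, dif_pos h5]
      have he : (⟨n+1-1, h5⟩ : Fin (n+1)) = Fin.last n := Fin.ext (by simp)
      rw [he]
    by_cases hk : k = n
    · subst hk
      have hlast : (⟨k, h2⟩ : Fin (k+1)) = Fin.last k := rfl
      rw [hlast, Lstat_last hx]
      simp only [lam, eq_self_iff_true, if_true]
      rw [hol_last]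
      omega
    · have hkn : k < n := by omega
      simp only [lam, if_neg hk]
      have hcong : lam n (fun i => if oneline x i < oneline x (n+1)
            then oneline x i else oneline x i - 1) k = lam n (oneline (hatf x)) k := by
        apply lam_congr
        intro i hi
        have hn1 : (1:ℕ) ≤ n := by omega
        have hi1 : i - 1 < n := by omega
        have hi2 : i - 1 < n + 1 := by omega
        have hcs : ((⟨i-1, hi1⟩ : Fin n).castSucc) = (⟨i-1, hi2⟩ : Fin (n+1)) :=
          Fin.ext rfl
        have hne := ne_last_val hx ⟨i-1, hi1⟩
        rw [hcs] at hne
        show (if oneline x i < oneline x (n + 1) then oneline x i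
          else oneline x i - 1) = oneline (hatf x) i
        rw [hol_last]
        have h3 : oneline x i = (x ⟨i-1, hi2⟩).val + 1 := by
          simp only [oneline, dif_pos hi2]
        have h4 : oneline (hatf x) i = (hatf x ⟨i-1, hi1⟩).val + 1 := by
          simp only [oneline, dif_pos hi1]
        rw [h3, h4, hatf_val, hcs]
        split_ifs <;> omega
      rw [hcong, ih (hatf x) (hatf_injective hx) k h1 hkn, ← Lstat_castSucc hx ⟨k, hkn⟩]
      congr 1


/-- The set of values occupied by `x` at positions `≤ p`. -/
def Sset (x : Equiv.Perm (Fin n)) (p : ℕ) : Finset (Fin n) :=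
  Finset.univ.filter fun v => (x.symm v).val ≤ p

lemma mem_Sset {x : Equiv.Perm (Fin n)} {p : ℕ} {v : Fin n} :
    v ∈ Sset x p ↔ (x.symm v).val ≤ p := by simp [Sset]

lemma Sset_eq {x y : Equiv.Perm (Fin n)} {p : ℕ}
    (h : ∀ j : Fin n, p < j.val → x j = y j) : Sset x p = Sset y p := by
  ext v
  simp only [mem_Sset]
  constructor
  · intro hx
    by_contra hy
    push_neg at hy
    have h1 : x (y.symm v) = y (y.symm v) := h (y.symm v) hy
    rw [y.apply_symm_apply] at h1
    have h2 : x.symm v = y.symm v := by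
      apply x.injective; rw [h1, x.apply_symm_apply]
    rw [h2] at hx; omega
  · intro hy
    by_contra hx
    push_neg at hx
    have h1 : x (x.symm v) = y (x.symm v) := h (x.symm v) hx
    rw [x.apply_symm_apply] at h1
    have h2 : y.symm v = x.symm v := by
      apply y.injective; rw [← h1, y.apply_symm_apply]
    rw [h2] at hy; omega

lemma Lstat_eq_Sset {x : Equiv.Perm (Fin n)} {p : ℕ} (hp : p < n) :
    Lstat ⇑x ⟨p, hp⟩ = ((Sset x p).filter fun v => x ⟨p, hp⟩ < v).card := by
  classical
  unfold Lstat
  apply Finset.card_bij (fun j _ => x j)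
  · intro a ha
    simp only [Finset.mem_filter, Finset.mem_univ, true_and] at ha
    simp only [Finset.mem_filter, mem_Sset, Equiv.symm_apply_apply]
    exact ⟨le_of_lt (lt_of_lt_of_le ha.1 (le_refl _)), ha.2⟩
  · intro a _ b _ h
    exact x.injective h
  · intro v hv
    simp only [Finset.mem_filter, mem_Sset] at hv
    refine ⟨x.symm v, ?_, x.apply_symm_apply v⟩
    simp only [Finset.mem_filter, Finset.mem_univ, true_and, x.apply_symm_apply]
    refine ⟨?_, hv.2⟩
    have hne : x.symm v ≠ ⟨p, hp⟩ := by
      intro hc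
      have : v = x ⟨p, hp⟩ := by rw [← hc, x.apply_symm_apply]
      rw [this] at hv
      exact lt_irrefl _ hv.2
    have : (x.symm v).val ≠ p := fun hc => hne (Fin.ext hc)
    have := hv.1
    have hval : ((⟨p, hp⟩ : Fin n)).val = p := rfl
    exact Fin.lt_def.mpr (by omega)

lemma le_of_dom {x y : Equiv.Perm (Fin n)} {p : ℕ} (hp : p < n)
    (hagr : ∀ j : Fin n, p < j.val → x j = y j)
    (hdom : Lstat ⇑y ⟨p, hp⟩ ≤ Lstat ⇑x ⟨p, hp⟩) : x ⟨p, hp⟩ ≤ y ⟨p, hp⟩ := by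
  classical
  by_contra hc
  push_neg at hc
  have hS := Sset_eq hagr
  rw [Lstat_eq_Sset hp, Lstat_eq_Sset hp, ← hS] at hdom
  have hsub : (Sset x p).filter (fun v => x ⟨p, hp⟩ < v) ⊂
      (Sset x p).filter (fun v => y ⟨p, hp⟩ < v) := by
    constructor
    · intro v hv
      simp only [Finset.mem_filter] at hv ⊢
      exact ⟨hv.1, lt_trans hc hv.2⟩
    · intro hsub'
      have hmem : x ⟨p, hp⟩ ∈ (Sset x p).filter (fun v => y ⟨p, hp⟩ < v) := by
        simp only [Finset.mem_filter, mem_Sset, Equiv.symm_apply_apply]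
        exact ⟨le_refl _, hc⟩
      have := hsub' hmem
      simp only [Finset.mem_filter] at this
      exact lt_irrefl _ this.2
  exact absurd (Finset.card_lt_card hsub) (not_lt.mpr hdom)


lemma step_exists {x y : Equiv.Perm (Fin n)} {p : ℕ} (hp : p < n)
    (hagr : ∀ j : Fin n, p < j.val → x j = y j)
    (hdom : ∀ k, Lstat ⇑y k ≤ Lstat ⇑x k)
    (hlt : x ⟨p, hp⟩ < y ⟨p, hp⟩) :
    ∃ x' : Equiv.Perm (Fin n), Rr ⇑x ⇑x' ∧ (∀ j : Fin n, p < j.val → x' j = y j) ∧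
      (∀ k, Lstat ⇑y k ≤ Lstat ⇑x' k) ∧ x ⟨p, hp⟩ < x' ⟨p, hp⟩ ∧
      x' ⟨p, hp⟩ ≤ y ⟨p, hp⟩ := by
  classical
  set P : Fin n := ⟨p, hp⟩ with hP
  set w : Fin n := x P with hw
  set S : Finset (Fin n) := Sset x p with hS
  have hyP_S : y P ∈ S := by
    rw [hS, Sset_eq hagr, mem_Sset, Equiv.symm_apply_apply]
  have hS'ne : y P ∈ S.filter (fun v => w < v) := Finset.mem_filter.mpr ⟨hyP_S, hlt⟩
  set w' : Fin n := (S.filter (fun v => w < v)).min' ⟨y P, hS'ne⟩ with hw'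
  have hw'mem : w' ∈ S.filter (fun v => w < v) := Finset.min'_mem _ _
  have hw'S : w' ∈ S := (Finset.mem_filter.mp hw'mem).1
  have hww' : w < w' := (Finset.mem_filter.mp hw'mem).2
  have hw'le : w' ≤ y P := Finset.min'_le _ _ hS'ne
  have hmin : ∀ v, v ∈ S → w < v → w' ≤ v := fun v hv hwv =>
    Finset.min'_le _ _ (Finset.mem_filter.mpr ⟨hv, hwv⟩)
  set q' : Fin n := x.symm w' with hq'
  have hxq' : x q' = w' := x.apply_symm_apply w'
  have hq'P : q' ≠ P := by
    intro hc
    have : w' = w := by rw [← hxq', hc, ← hw]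
    exact (ne_of_gt hww') this
  have hq'p_le : q'.val ≤ p := by
    have := mem_Sset.mp (hS ▸ hw'S)
    exact this
  have hq'p : q'.val < p :=
    lt_of_le_of_ne hq'p_le (fun hc => hq'P (Fin.ext hc))
  set x' : Equiv.Perm (Fin n) := Equiv.swap w w' * x with hx'
  have hx'P : x' P = w' := by
    rw [hx', Equiv.Perm.mul_apply, ← hw, Equiv.swap_apply_left]
  have hx'q' : x' q' = w := by
    rw [hx', Equiv.Perm.mul_apply, hxq', Equiv.swap_apply_right]
  have hx'other : ∀ i, i ≠ P → i ≠ q' → x' i = x i := by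
    intro i h1 h2
    rw [hx', Equiv.Perm.mul_apply]
    apply Equiv.swap_apply_of_ne_of_ne
    · exact fun hc => h1 (x.injective (hc.trans hw))
    · exact fun hc => h2 (x.injective (hc.trans hxq'.symm))
  have hgap : ∀ v : Fin n, w < v → v < w' → p < (x.symm v).val := by
    intro v h1 h2
    by_contra hc
    push_neg at hc
    have hvS : v ∈ S := by rw [hS]; exact mem_Sset.mpr hc
    exact absurd (hmin v hvS h1) (not_le.mpr h2)
  have hRr : Rr ⇑x ⇑x' := by
    intro i v j h1 h2 h3
    by_cases hiP : i = P
    · rw [hiP, hx'P] at h1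
      rw [hiP, ← hw] at h2
      exact absurd h1 (not_lt.mpr (le_trans h2 (le_of_lt hww')))
    · by_cases hiq : i = q'
      · rw [hiq, hx'q'] at h1
        rw [hiq, hxq'] at h2
        by_cases hv : v = w'
        · have hjP : j = P := x'.injective (by rw [h3, hv, ← hx'P])
          rw [hiq, hjP]
          exact Fin.lt_def.mpr hq'p
        · have hvlt : v < w' := lt_of_le_of_ne h2 hv
          have hxj : x j = v := by
            have h4 : Equiv.swap w w' (x j) = v := by
              rw [← Equiv.Perm.mul_apply, ← hx']; exact h3
            have h5 : x j = Equiv.swap w w' v := by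
              rw [← h4, Equiv.swap_apply_self]
            rw [h5]
            exact Equiv.swap_apply_of_ne_of_ne (ne_of_gt h1) hv
          have hjval : p < j.val := by
            have hg := hgap v h1 hvlt
            rw [← hxj, Equiv.symm_apply_apply] at hg
            exact hg
          rw [hiq]
          exact Fin.lt_def.mpr (lt_trans hq'p hjval)
      · rw [hx'other i hiP hiq] at h1
        exact absurd h2 (not_le.mpr h1)
  have hagr' : ∀ j : Fin n, p < j.val → x' j = y j := by
    intro j hj
    have hjP : j ≠ P := by
      intro hc; rw [hc] at hj; exact absurd hj (lt_irrefl p)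
    have hjq : j ≠ q' := by
      intro hc; rw [hc] at hj; exact absurd hj (not_lt.mpr (le_of_lt hq'p))
    rw [hx'other j hjP hjq]
    exact hagr j hj
  have hSx' : Sset x' p = S := by
    have hB : x.symm w = P := by rw [hw, Equiv.symm_apply_apply]
    ext v
    rw [mem_Sset, hS, mem_Sset]
    have hsymm : x'.symm v = x.symm (Equiv.swap w w' v) := by
      rw [hx']
      rfl
    rw [hsymm]
    by_cases hv : v = w
    · rw [hv, Equiv.swap_apply_left]
      exact iff_of_true hq'p_le (by rw [hB])
    · by_cases hv' : v = w'
      · rw [hv', Equiv.swap_apply_right, hB]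
        exact iff_of_true (le_refl p) hq'p_le
      · rw [Equiv.swap_apply_of_ne_of_ne hv hv']
  have hLeq : ∀ k : Fin n, k.val ≠ p → Lstat ⇑x' k = Lstat ⇑x k := by
    intro k hkp
    have hkP : k ≠ P := fun hc => hkp (by rw [hc])
    rcases lt_or_gt_of_ne hkp with hklt | hkgt
    · unfold Lstat
      congr 1
      apply Finset.filter_congr
      intro j _
      by_cases hjk : j < k
      · simp only [hjk, true_and]
        have hjp : j.val < p := lt_trans (Fin.lt_def.mp hjk) hklt
        have hjP : j ≠ P := by
          intro hc; rw [hc] at hjp; exact absurd hjp (lt_irrefl p)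
        by_cases hkq : k = q'
        · have hjq : j ≠ q' := by
            intro hc; rw [hc, hkq] at hjk; exact absurd hjk (lt_irrefl q')
          rw [hkq, hx'q', hxq', hx'other j hjP hjq]
          constructor
          · intro h'
            have hxjS : x j ∈ S := by
              rw [hS]
              exact mem_Sset.mpr (by rw [Equiv.symm_apply_apply]; exact le_of_lt hjp)
            have hle := hmin (x j) hxjS h'
            have hne : x j ≠ w' := fun hc => hjq (x.injective (hc.trans hxq'.symm))
            exact lt_of_le_of_ne hle (Ne.symm hne)
          · intro h'; exact lt_trans hww' h'
        · by_cases hjq : j = q'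
          · rw [hx'other k hkP hkq, hjq, hx'q', hxq']
            have hxkS : x k ∈ S := by
              rw [hS]
              exact mem_Sset.mpr (by rw [Equiv.symm_apply_apply]; exact le_of_lt hklt)
            have hkw : x k ≠ w := fun hc => hkP (x.injective (hc.trans hw))
            constructor
            · intro h'; exact lt_trans h' hww'
            · intro h'
              rcases lt_or_gt_of_ne hkw with h'' | h''
              · exact h''
              · exact absurd (hmin (x k) hxkS h'') (not_le.mpr h')
          · rw [hx'other k hkP hkq, hx'other j hjP hjq]
      · simp [hjk]
    · have hkq : k ≠ q' := by
        intro hc; rw [hc] at hkgt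
        exact absurd hkgt (not_lt.mpr (le_of_lt hq'p))
      have hswap_pos : ∀ j : Fin n, x' (Equiv.swap P q' j) = x j := by
        intro j
        by_cases hjP : j = P
        · rw [hjP, Equiv.swap_apply_left, hx'q', hw]
        · by_cases hjq : j = q'
          · rw [hjq, Equiv.swap_apply_right, hx'P, hxq']
          · rw [Equiv.swap_apply_of_ne_of_ne hjP hjq, hx'other j hjP hjq]
      have hmemlt : ∀ j : Fin n, j < k → Equiv.swap P q' j < k := by
        intro j hj
        by_cases hjP : j = P
        · rw [hjP, Equiv.swap_apply_left]
          exact Fin.lt_def.mpr (lt_trans hq'p hkgt)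
        · by_cases hjq : j = q'
          · rw [hjq, Equiv.swap_apply_right]
            exact Fin.lt_def.mpr hkgt
          · rw [Equiv.swap_apply_of_ne_of_ne hjP hjq]; exact hj
      unfold Lstat
      symm
      apply Finset.card_bij (fun j _ => Equiv.swap P q' j)
      · intro a ha
        simp only [Finset.mem_filter, Finset.mem_univ, true_and] at ha ⊢
        refine ⟨hmemlt a ha.1, ?_⟩
        rw [hswap_pos a, hx'other k hkP hkq]
        exact ha.2
      · intro a _ b _ h
        exact (Equiv.swap P q').injective h
      · intro b hb
        simp only [Finset.mem_filter, Finset.mem_univ, true_and] at hb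
        refine ⟨Equiv.swap P q' b, ?_, Equiv.swap_apply_self _ _ _⟩
        simp only [Finset.mem_filter, Finset.mem_univ, true_and]
        refine ⟨hmemlt b hb.1, ?_⟩
        have h1 : x (Equiv.swap P q' b) = x' b := by
          rw [← hswap_pos (Equiv.swap P q' b), Equiv.swap_apply_self]
        rw [h1, ← hx'other k hkP hkq]
        exact hb.2
  have hdom' : ∀ k, Lstat ⇑y k ≤ Lstat ⇑x' k := by
    intro k
    by_cases hkp : k.val = p
    · have hk : k = P := Fin.ext hkp
      rw [hk, hP, Lstat_eq_Sset hp, Lstat_eq_Sset hp, hSx', hS, Sset_eq hagr]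
      apply Finset.card_le_card
      intro v hv
      simp only [Finset.mem_filter] at hv ⊢
      refine ⟨hv.1, lt_of_le_of_lt ?_ hv.2⟩
      rw [← hP, hx'P]
      exact hw'le
    · rw [hLeq k hkp]
      exact hdom k
  refine ⟨x', hRr, hagr', hdom', ?_, ?_⟩
  · rw [hx'P]; exact hww'
  · rw [hx'P]; exact hw'le


lemma chain_aux : ∀ (p : ℕ) (x y : Equiv.Perm (Fin n)),
    (∀ j : Fin n, p ≤ j.val → x j = y j) → (∀ k, Lstat ⇑y k ≤ Lstat ⇑x k) →
    Relation.ReflTransGen (fun u v : Equiv.Perm (Fin n) => Rr ⇑u ⇑v) x y := by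
  intro p
  induction p with
  | zero =>
    intro x y hagr _
    have hxy : x = y := Equiv.ext fun j => hagr j (Nat.zero_le _)
    rw [hxy]
  | succ p ih =>
    intro x y hagr hdom
    by_cases hp : p < n
    · have inner : ∀ (d : ℕ) (x' : Equiv.Perm (Fin n)),
          (y ⟨p, hp⟩).val - (x' ⟨p, hp⟩).val ≤ d →
          (∀ j : Fin n, p < j.val → x' j = y j) →
          (∀ k, Lstat ⇑y k ≤ Lstat ⇑x' k) →
          Relation.ReflTransGen (fun u v : Equiv.Perm (Fin n) => Rr ⇑u ⇑v) x' y := by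
        intro d
        induction d with
        | zero =>
          intro x' hd hagr' hdom'
          have hle := le_of_dom hp hagr' (hdom' ⟨p, hp⟩)
          have hge : (y ⟨p, hp⟩).val ≤ (x' ⟨p, hp⟩).val := by omega
          have heq : x' ⟨p, hp⟩ = y ⟨p, hp⟩ := le_antisymm hle (Fin.le_def.mpr hge)
          apply ih
          · intro j hj
            rcases Nat.eq_or_lt_of_le hj with h1 | h1
            · have hj' : j = ⟨p, hp⟩ := Fin.ext h1.symm
              rw [hj']; exact heq
            · exact hagr' j h1
          · exact hdom'
        | succ d ihd =>
          intro x' hd hagr' hdom'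
          rcases lt_or_ge (x' ⟨p, hp⟩) (y ⟨p, hp⟩) with hlt | hge
          · obtain ⟨x'', hR, hagr'', hdom'', hinc, hle'⟩ :=
              step_exists hp hagr' hdom' hlt
            apply Relation.ReflTransGen.head (b := x'') hR
            apply ihd x''
            · have h1 : (x' ⟨p, hp⟩).val < (x'' ⟨p, hp⟩).val := hinc
              have h2 : (x'' ⟨p, hp⟩).val ≤ (y ⟨p, hp⟩).val := hle'
              omega
            · exact hagr''
            · exact hdom''
          · apply ihd x'
            · have h1 : (y ⟨p, hp⟩).val ≤ (x' ⟨p, hp⟩).val := hge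
              omega
            · exact hagr'
            · exact hdom'
      exact inner _ x (le_refl _) (fun j hj => hagr j hj) hdom
    · apply ih
      · intro j hj
        exact absurd j.isLt (by omega)
      · exact hdom

lemma Lstat_zero (z : Fin n → Fin n) (k : Fin n) (hk : k.val = 0) : Lstat z k = 0 := by
  classical
  unfold Lstat
  simp only [Finset.card_eq_zero, Finset.filter_eq_empty_iff]
  intro j _
  intro hc
  have := Fin.lt_def.mp hc.1
  omega

theorem stmt14' {n : ℕ} (x y : Equiv.Perm (Fin n)) :
    PseudoGE x y ↔
      ∀ k, 1 ≤ k → k ≤ n - 1 → lam n (oneline ⇑y) k ≤ lam n (oneline ⇑x) k := by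
  constructor
  · intro h
    have hdom : ∀ k : Fin n, Lstat ⇑y k ≤ Lstat ⇑x k := by
      induction h with
      | refl => exact fun k => le_rfl
      | tail hxb hbc ihh =>
        intro k
        exact le_trans
          (rr_lstat_le n _ _ (Equiv.injective _) (Equiv.injective _)
            ((reaches_iff_s14 _ _).mp hbc) k) (ihh k)
    intro k h1 h2
    have hk : k < n := by omega
    rw [lam_eq n ⇑x x.injective k h1 hk, lam_eq n ⇑y y.injective k h1 hk]
    exact hdom ⟨k, hk⟩
  · intro h
    have hdom : ∀ k : Fin n, Lstat ⇑y k ≤ Lstat ⇑x k := by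
      intro k
      by_cases hk0 : k.val = 0
      · rw [Lstat_zero ⇑y k hk0]
        exact Nat.zero_le _
      · have hk1 : 1 ≤ k.val := by omega
        have hk2 : k.val ≤ n - 1 := by have := k.isLt; omega
        have hlam := h k.val hk1 hk2
        rw [lam_eq n ⇑y y.injective k.val hk1 k.isLt,
          lam_eq n ⇑x x.injective k.val hk1 k.isLt] at hlam
        have hkk : (⟨k.val, k.isLt⟩ : Fin n) = k := Fin.ext rfl
        rw [hkk] at hlam
        exact hlam
    exact Relation.ReflTransGen.mono (fun a b hr => (reaches_iff_s14 a b).mpr hr) _ _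
      (chain_aux n x y (fun j hj => absurd j.isLt (by omega)) hdom)

end Aux

/-- Theorem `thm:same`. The pseudoreachability order coincides with
the bubble-sorting order: `x ≥_P y` iff `λ_k(x) ≥ λ_k(y)` for all `k ∈ [n-1]`. -/
theorem stmt14 {n : ℕ} (x y : Equiv.Perm (Fin n)) :
    PseudoGE x y ↔
      ∀ k, 1 ≤ k → k ≤ n - 1 → lam n (oneline ⇑y) k ≤ lam n (oneline ⇑x) k := by
  exact stmt14' x y
end

section
/- If x, y are permutations of [n] with x ≥_B y in Bruhat order and y avoids the pattern 213, then x ⊵_R y. -/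
/-- Theorem `thm:213-avoiding`. If `x ≥_B y` and `y` avoids the
pattern `213`, then `x ⊵_R y`. (Note `Equiv.swap 0 1 : Equiv.Perm (Fin 3)` has
one-line notation `213`.) -/
theorem stmt15 {n : ℕ} (x y : Equiv.Perm (Fin n)) (hB : BruhatGE x y)
    (hav : ¬ ContainsPattern y (Equiv.swap 0 1 : Equiv.Perm (Fin 3))) :
    Reaches ⇑x ⇑y := by
  -- Key lemma: if `y i < t ≤ x i` then `y⁻¹ t > i`.
  have key : ∀ i t : Fin n, y i < t → t ≤ x i → i < y.symm t := by
    intro i t h1 h2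
    by_contra hlt
    push_neg at hlt
    have hne : y.symm t ≠ i := by
      intro h
      rw [← h, Equiv.apply_symm_apply] at h1
      exact lt_irrefl _ h1
    have hj : y.symm t < i := lt_of_le_of_ne hlt hne
    set j := y.symm t with hjdef
    have hyj : y j = t := y.apply_symm_apply t
    -- all positions after `i` carry values `< t` (else a 213 pattern appears)
    have hlater : ∀ r : Fin n, i < r → y r < t := by
      intro r hr
      by_contra hge
      push_neg at hge
      have hne2 : y r ≠ t := by
        intro h
        have hrj : r = j := y.injective (by rw [hyj, h])
        rw [hrj] at hr
        exact absurd (hj.trans hr) (lt_irrefl _)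
      have htr : t < y r := lt_of_le_of_ne hge hne2.symm
      apply hav
      have hs : ∀ p : Fin 3, ((Equiv.swap 0 1 : Equiv.Perm (Fin 3)) p).val =
          if p.val = 0 then 1 else if p.val = 1 then 0 else 2 := by decide
      have hv1' : (y i).val < (y j).val := by rw [hyj]; exact h1
      have hv2' : (y j).val < (y r).val := by rw [hyj]; exact htr
      have hj' : j.val < i.val := hj
      have hr' : r.val > i.val := hr
      refine ⟨fun p => if p.val = 0 then j else if p.val = 1 then i else r, ?_, ?_⟩
      · rintro ⟨pv, hp⟩ ⟨qv, hq⟩ hpq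
        simp only [Fin.mk_lt_mk] at hpq
        simp only [Fin.lt_def]
        interval_cases pv <;> interval_cases qv <;> norm_num <;> omega
      · rintro ⟨pv, hp⟩ ⟨qv, hq⟩
        simp only [Fin.lt_def, hs]
        interval_cases pv <;> interval_cases qv <;> norm_num <;> omega
    -- every value `≥ t` sits at a position `< i`
    have hpos : ∀ v : Fin n, t ≤ v → y.symm v < i := by
      intro v hv
      rcases lt_trichotomy (y.symm v) i with h | h | h
      · exact h
      · exfalso
        have : y i = v := by rw [← h, Equiv.apply_symm_apply]
        rw [this] at h1
        exact absurd (h1.trans_le hv) (lt_irrefl _)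
      · exfalso
        have := hlater _ h
        rw [Equiv.apply_symm_apply] at this
        exact absurd (this.trans_le hv) (lt_irrefl _)
    have hi1 : 1 ≤ i.val := by
      have h := Fin.lt_def.mp hj
      omega
    have hin : i.val < n := i.isLt
    set i0 : Fin n := ⟨i.val - 1, by omega⟩ with hi0
    -- lower bound for `bcount y i0 t`
    have hylb : n - t.val ≤ bcount ⇑y i0 t := by
      have hsub : (Finset.Ici t).image y.symm ⊆
          Finset.univ.filter (fun k : Fin n => k ≤ i0 ∧ t ≤ y k) := by
        intro k hk
        obtain ⟨v, hv, rfl⟩ := Finset.mem_image.1 hk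
        have hv' : t ≤ v := Finset.mem_Ici.1 hv
        have h3 := hpos v hv'
        refine Finset.mem_filter.2 ⟨Finset.mem_univ _, ?_, ?_⟩
        · simp only [Fin.lt_def] at h3
          simp only [Fin.le_def, hi0]
          omega
        · rw [Equiv.apply_symm_apply]; exact hv'
      have hcard : ((Finset.Ici t).image y.symm).card = n - t.val := by
        rw [Finset.card_image_of_injective _ y.symm.injective, Fin.card_Ici]
      calc n - t.val = ((Finset.Ici t).image y.symm).card := hcard.symm
        _ ≤ _ := Finset.card_le_card hsub
    -- upper bound for `bcount x i0 t`
    have hxub : bcount ⇑x i0 t + 1 ≤ n - t.val := by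
      have hmem : i ∈ (Finset.Ici t).image x.symm := by
        refine Finset.mem_image.2 ⟨x i, Finset.mem_Ici.2 h2, x.symm_apply_apply i⟩
      have hsub : Finset.univ.filter (fun k : Fin n => k ≤ i0 ∧ t ≤ x k) ⊆
          ((Finset.Ici t).image x.symm).erase i := by
        intro k hk
        obtain ⟨-, hk1, hk2⟩ := Finset.mem_filter.1 hk
        refine Finset.mem_erase.2 ⟨?_, ?_⟩
        · intro h
          rw [h] at hk1
          simp only [Fin.le_def, hi0] at hk1
          omega
        · exact Finset.mem_image.2 ⟨x k, Finset.mem_Ici.2 hk2, x.symm_apply_apply k⟩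
      have hcard : ((Finset.Ici t).image x.symm).card = n - t.val := by
        rw [Finset.card_image_of_injective _ x.symm.injective, Fin.card_Ici]
      have h4 : (((Finset.Ici t).image x.symm).erase i).card + 1 = n - t.val := by
        rw [Finset.card_erase_of_mem hmem, ← hcard]
        have : 1 ≤ ((Finset.Ici t).image x.symm).card := Finset.card_pos.2 ⟨i, hmem⟩
        omega
      have := Finset.card_le_card hsub
      unfold bcount
      omega
    have hBi := hB i0 t
    unfold bcount at hylb hxub hBi
    omega
  -- the construction
  refine ⟨⇑x, fun i => max (x i) (y i), ⟨⇑x, x.injective, ?_⟩, ⟨x.injective, ?_⟩, ?_⟩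
  · intro i
    refine ⟨le_refl _, le_max_left _ _, fun s hs hs' => absurd (hs.trans_lt hs') (lt_irrefl _)⟩
  · intro i
    exact ⟨le_refl _, fun s hs hs' => absurd (hs.trans_lt hs') (lt_irrefl _)⟩
  · constructor
    · intro u v h
      have := Fin.rev_injective (y.injective (Fin.rev_injective h))
      exact this
    · intro i
      constructor
      · unfold pconj
        rw [Fin.rev_le_rev]
        exact le_max_right _ _
      · intro s hs1 hs2
        unfold pconj at hs1 hs2
        set i' := i.rev with hi'
        set t := s.rev with ht
        have ht1 : y i' < t := by
          rw [ht, ← Fin.rev_lt_rev, Fin.rev_rev]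
          exact hs2
        have ht2 : t ≤ max (x i') (y i') := by
          rw [ht, ← Fin.rev_le_rev, Fin.rev_rev]
          exact hs1
        have ht3 : t ≤ x i' := by
          rcases le_max_iff.1 ht2 with h | h
          · exact h
          · exact absurd (ht1.trans_le h) (lt_irrefl _)
        have hk := key i' t ht1 ht3
        refine ⟨(y.symm t).rev, ?_, ?_⟩
        · rw [← Fin.rev_rev i, ← hi', Fin.rev_lt_rev]
          exact hk
        · unfold pconj
          rw [Fin.rev_rev, Equiv.apply_symm_apply, ht, Fin.rev_rev]
end

section
/- For a permutation x of [n], the following are equivalent: (1) x^{-1}(i) ≤ i + 1 for all i ∈ [n]; (2) #{k ∈ [j] : x(k) ≥ j} = 1 for all j ∈ [n]; (3) x avoids both of the patterns 231 and 321; (4) x = s_{i_1} s_{i_2} ⋯ s_{i_k} for some strictly decreasing sequence n − 1 ≥ i_1 > i_2 > ⋯ > i_k ≥ 1 (possibly the empty product, giving the identity). -/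
section ARAux
open Finset
variable {n : ℕ}

/-- Auxiliary condition: `x(k) ≥ k - 1` for all `k`. -/
def Pcond (x : Equiv.Perm (Fin n)) : Prop := ∀ k : Fin n, (k : ℕ) ≤ (x k : ℕ) + 1





lemma card_le_filter (j : Fin n) :
    (Finset.univ.filter (fun k : Fin n => k ≤ j)).card = j.val + 1 := by
  rw [show (Finset.univ.filter (fun k : Fin n => k ≤ j)) = Finset.Iic j by ext k; simp]
  simp

lemma card_xlt_filter (x : Equiv.Perm (Fin n)) (j : Fin n) :
    (Finset.univ.filter (fun k : Fin n => x k < j)).card = j.val := by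
  have : (Finset.univ.filter (fun k : Fin n => x k < j))
      = (Finset.Iio j).map x.symm.toEmbedding := by
    ext k; simp [Equiv.symm_apply_eq]
  rw [this, Finset.card_map]; simp

lemma L1 (x : Equiv.Perm (Fin n)) :
    (∀ i : Fin n, (x.symm i).val ≤ i.val + 1) ↔ Pcond x := by
  constructor
  · intro h k
    have := h (x k)
    simpa using this
  · intro h i
    have := h (x.symm i)
    simpa using this

lemma L12 (x : Equiv.Perm (Fin n)) (h : Pcond x) (j : Fin n) :
    (Finset.univ.filter (fun k : Fin n => k ≤ j ∧ j ≤ x k)).card = 1 := by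
  have hsub : (Finset.univ.filter (fun k : Fin n => x k < j))
      ⊆ (Finset.univ.filter (fun k : Fin n => k ≤ j)) := by
    intro k hk
    simp only [mem_filter, mem_univ, true_and] at hk ⊢
    have h1 := h k
    have hlt : (x k : ℕ) < (j : ℕ) := hk
    exact Fin.le_def.2 (by omega)
  have key : (Finset.univ.filter (fun k : Fin n => k ≤ j ∧ j ≤ x k))
      = (Finset.univ.filter (fun k : Fin n => k ≤ j)) \
        (Finset.univ.filter (fun k : Fin n => x k < j)) := by
    ext k
    simp only [mem_filter, mem_univ, true_and, mem_sdiff, not_lt]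
  rw [key, card_sdiff_of_subset hsub, card_le_filter, card_xlt_filter]
  omega

lemma L21 (x : Equiv.Perm (Fin n))
    (h : ∀ j : Fin n, (Finset.univ.filter (fun k : Fin n => k ≤ j ∧ j ≤ x k)).card = 1) :
    Pcond x := by
  intro k
  by_cases hb : (x k : ℕ) + 1 < n
  · set j : Fin n := ⟨(x k : ℕ) + 1, hb⟩ with hj
    -- filter (k' ≤ j ∧ x k' < j) has card j.val = x k + 1
    have h1 : ((Finset.univ.filter (fun k' : Fin n => k' ≤ j)).filter
        (fun k' => ¬ (j ≤ x k'))).card = (j : ℕ) := by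
      have := Finset.card_filter_add_card_filter_not
        (s := Finset.univ.filter (fun k' : Fin n => k' ≤ j)) (p := fun k' => j ≤ x k')
      have h2 : (Finset.univ.filter (fun k' : Fin n => k' ≤ j)).filter (fun k' => j ≤ x k')
          = Finset.univ.filter (fun k' : Fin n => k' ≤ j ∧ j ≤ x k') := by
        rw [Finset.filter_filter]
      rw [h2, h j, card_le_filter] at this
      omega
    -- and it's a subset of filter (x k' < j) which has card j.val
    have hsub : ((Finset.univ.filter (fun k' : Fin n => k' ≤ j)).filter
        (fun k' => ¬ (j ≤ x k'))) ⊆ (Finset.univ.filter (fun k' : Fin n => x k' < j)) := by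
      intro k' hk'
      simp only [Finset.filter_filter, mem_filter, mem_univ, true_and, not_le] at hk' ⊢
      exact hk'.2
    have heq := Finset.eq_of_subset_of_card_le hsub
      (by rw [card_xlt_filter, h1])
    -- k has x k < j so k ∈ rhs = lhs, hence k ≤ j
    have hk : k ∈ (Finset.univ.filter (fun k' : Fin n => x k' < j)) := by
      simp only [mem_filter, mem_univ, true_and]
      exact Fin.lt_def.2 (by simp [hj])
    rw [← heq] at hk
    simp only [Finset.filter_filter, mem_filter, mem_univ, true_and] at hk
    have := hk.1
    simpa [hj, Fin.le_def] using this
  · have := k.isLt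
    omega




lemma build_pattern (x : Equiv.Perm (Fin n)) (σ : Equiv.Perm (Fin 3)) (a b k : Fin n)
    (hab : a < b) (hbk : b < k)
    (h01 : (x a : ℕ) < (x b : ℕ) ↔ ((σ 0 : Fin 3) : ℕ) < ((σ 1 : Fin 3) : ℕ))
    (h02 : (x a : ℕ) < (x k : ℕ) ↔ ((σ 0 : Fin 3) : ℕ) < ((σ 2 : Fin 3) : ℕ))
    (h12 : (x b : ℕ) < (x k : ℕ) ↔ ((σ 1 : Fin 3) : ℕ) < ((σ 2 : Fin 3) : ℕ)) :
    ContainsPattern x σ := by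
  have hak : a < k := lt_trans hab hbk
  set f : Fin 3 → Fin n := fun u => if u = 0 then a else if u = 1 then b else k with hf
  have hne01 : (x a : ℕ) ≠ (x b : ℕ) := fun h =>
    (ne_of_lt hab) (x.injective (Fin.ext h))
  have hne02 : (x a : ℕ) ≠ (x k : ℕ) := fun h =>
    (ne_of_lt hak) (x.injective (Fin.ext h))
  have hne12 : (x b : ℕ) ≠ (x k : ℕ) := fun h =>
    (ne_of_lt hbk) (x.injective (Fin.ext h))
  have hs01 : ((σ 0 : Fin 3) : ℕ) ≠ ((σ 1 : Fin 3) : ℕ) := fun h =>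
    (by decide : (0 : Fin 3) ≠ 1) (σ.injective (Fin.ext h))
  have hs02 : ((σ 0 : Fin 3) : ℕ) ≠ ((σ 2 : Fin 3) : ℕ) := fun h =>
    (by decide : (0 : Fin 3) ≠ 2) (σ.injective (Fin.ext h))
  have hs12 : ((σ 1 : Fin 3) : ℕ) ≠ ((σ 2 : Fin 3) : ℕ) := fun h =>
    (by decide : (1 : Fin 3) ≠ 2) (σ.injective (Fin.ext h))
  have e0 : ∀ (h : (0:ℕ) < 3), (⟨0, h⟩ : Fin 3) = 0 := fun _ => rfl
  have e1 : ∀ (h : (1:ℕ) < 3), (⟨1, h⟩ : Fin 3) = 1 := fun _ => rfl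
  have e2 : ∀ (h : (2:ℕ) < 3), (⟨2, h⟩ : Fin 3) = 2 := fun _ => rfl
  have hab' : (a : ℕ) < b := hab
  have hbk' : (b : ℕ) < k := hbk
  refine ⟨f, ?_, ?_⟩
  · intro u v huv
    fin_cases u <;> fin_cases v <;>
      simp (config := { decide := true }) only [hf, Fin.lt_def, e0, e1, e2,
        if_true, if_false, ite_true, ite_false] at huv ⊢ <;> omega
  · intro u v
    fin_cases u <;> fin_cases v <;>
      simp (config := { decide := true }) only [hf, Fin.lt_def, e0, e1, e2,
        if_true, if_false, ite_true, ite_false] <;> omega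



lemma LnotP (x : Equiv.Perm (Fin n)) (hP : ¬ Pcond x) :
    ContainsPattern x (Equiv.swap 0 1 * Equiv.swap 1 2 : Equiv.Perm (Fin 3)) ∨
    ContainsPattern x (Equiv.swap 0 2 : Equiv.Perm (Fin 3)) := by
  simp only [Pcond, not_forall, not_le] at hP
  obtain ⟨k, hk⟩ := hP
  -- C : positions before k with larger value
  set C := Finset.univ.filter (fun m : Fin n => m < k ∧ x k < x m) with hC
  have hcard : 2 ≤ C.card := by
    have hsplit := Finset.card_filter_add_card_filter_not
      (s := Finset.univ.filter (fun m : Fin n => m < k)) (p := fun m => x k < x m)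
    have hs : (Finset.univ.filter (fun m : Fin n => m < k)).card = (k : ℕ) := by
      rw [show (Finset.univ.filter (fun m : Fin n => m < k)) = Finset.Iio k by ext m; simp]
      simp
    have hsub : (Finset.univ.filter (fun m : Fin n => m < k)).filter
        (fun m => ¬ (x k < x m)) ⊆ Finset.univ.filter (fun m : Fin n => x m < x k) := by
      intro m hm
      simp only [Finset.filter_filter, mem_filter, mem_univ, true_and, not_lt] at hm ⊢
      rcases hm with ⟨h1, h2⟩
      rcases lt_or_eq_of_le h2 with h3 | h3
      · exact h3
      · exact absurd (x.injective h3) (ne_of_lt h1)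
    have hlt : (Finset.univ.filter (fun m : Fin n => x m < x k)).card = ((x k : Fin n) : ℕ) := by
      have : (Finset.univ.filter (fun m : Fin n => x m < x k))
          = (Finset.Iio (x k)).map x.symm.toEmbedding := by
        ext m; simp [Equiv.symm_apply_eq]
      rw [this, Finset.card_map]; simp
    have h4 := Finset.card_le_card hsub
    rw [hlt] at h4
    rw [hs] at hsplit
    have h5 : (Finset.univ.filter (fun m : Fin n => m < k)).filter (fun m => x k < x m) = C := by
      rw [Finset.filter_filter]
    rw [h5] at hsplit
    omega
  obtain ⟨a, ha, b, hb, hne⟩ := Finset.one_lt_card.mp hcard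
  simp only [hC, mem_filter, mem_univ, true_and] at ha hb
  -- wlog a < b
  obtain ⟨a, b, hab, hak, hbk, hxa, hxb⟩ :
      ∃ a b : Fin n, a < b ∧ a < k ∧ b < k ∧ x k < x a ∧ x k < x b := by
    rcases lt_or_gt_of_ne hne with h | h
    · exact ⟨a, b, h, ha.1, hb.1, ha.2, hb.2⟩
    · exact ⟨b, a, h, hb.1, ha.1, hb.2, ha.2⟩
  rcases lt_or_gt_of_ne (fun h : x a = x b => (ne_of_lt hab) (x.injective h)) with hvab | hvab
  · -- x a < x b : pattern 231
    left
    refine build_pattern x _ a b k hab hbk ?_ ?_ ?_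
    · rw [show (((Equiv.swap 0 1 * Equiv.swap 1 2 : Equiv.Perm (Fin 3)) 0 : Fin 3) : ℕ) = 1 from by decide,
        show (((Equiv.swap 0 1 * Equiv.swap 1 2 : Equiv.Perm (Fin 3)) 1 : Fin 3) : ℕ) = 2 from by decide]
      simpa using hvab
    · rw [show (((Equiv.swap 0 1 * Equiv.swap 1 2 : Equiv.Perm (Fin 3)) 0 : Fin 3) : ℕ) = 1 from by decide,
        show (((Equiv.swap 0 1 * Equiv.swap 1 2 : Equiv.Perm (Fin 3)) 2 : Fin 3) : ℕ) = 0 from by decide]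
      simp only [Nat.not_lt_zero, iff_false, not_lt]
      exact le_of_lt hxa
    · rw [show (((Equiv.swap 0 1 * Equiv.swap 1 2 : Equiv.Perm (Fin 3)) 1 : Fin 3) : ℕ) = 2 from by decide,
        show (((Equiv.swap 0 1 * Equiv.swap 1 2 : Equiv.Perm (Fin 3)) 2 : Fin 3) : ℕ) = 0 from by decide]
      simp only [Nat.not_lt_zero, iff_false, not_lt]
      exact le_of_lt hxb
  · -- x b < x a : pattern 321
    right
    refine build_pattern x _ a b k hab hbk ?_ ?_ ?_
    · rw [show (((Equiv.swap 0 2 : Equiv.Perm (Fin 3)) 0 : Fin 3) : ℕ) = 2 from by decide,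
        show (((Equiv.swap 0 2 : Equiv.Perm (Fin 3)) 1 : Fin 3) : ℕ) = 1 from by decide]
      simp only [show ¬ ((2:ℕ) < 1) from by omega, iff_false, not_lt]
      exact le_of_lt hvab
    · rw [show (((Equiv.swap 0 2 : Equiv.Perm (Fin 3)) 0 : Fin 3) : ℕ) = 2 from by decide,
        show (((Equiv.swap 0 2 : Equiv.Perm (Fin 3)) 2 : Fin 3) : ℕ) = 0 from by decide]
      simp only [Nat.not_lt_zero, iff_false, not_lt]
      exact le_of_lt hxa
    · rw [show (((Equiv.swap 0 2 : Equiv.Perm (Fin 3)) 1 : Fin 3) : ℕ) = 1 from by decide,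
        show (((Equiv.swap 0 2 : Equiv.Perm (Fin 3)) 2 : Fin 3) : ℕ) = 0 from by decide]
      simp only [Nat.not_lt_zero, iff_false, not_lt]
      exact le_of_lt hxb




lemma sgen_eq {i : ℕ} (h1 : 1 ≤ i) (h2 : i < n) :
    sgen n i = Equiv.swap ⟨i - 1, by omega⟩ ⟨i, h2⟩ := dif_pos ⟨h1, h2⟩

lemma sgen_mul_self (i : ℕ) : sgen n i * sgen n i = 1 := by
  unfold sgen
  split
  · exact Equiv.swap_mul_self _ _
  · simp

lemma L4Paux : ∀ l : List ℕ, l.Pairwise (· > ·) → (∀ i ∈ l, 1 ≤ i ∧ i ≤ n - 1) →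
    Pcond ((l.map (sgen n)).prod) ∧
    ∀ p : Fin n, (∀ i ∈ l, i < (p : ℕ)) → (l.map (sgen n)).prod p = p := by
  intro l
  induction l with
  | nil =>
    intro _ _
    constructor
    · intro k; simp
    · intro p _; simp
  | cons i t ih =>
    intro hp hb
    obtain ⟨hit, hpt⟩ := List.pairwise_cons.mp hp
    obtain ⟨hi1, hin⟩ := hb i (List.mem_cons_self)
    have hiltn : i < n := by omega
    have him1 : i - 1 < n := by omega
    obtain ⟨hPy, hfix⟩ := ih hpt (fun j hj => hb j (List.mem_cons_of_mem _ hj))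
    set y : Equiv.Perm (Fin n) := (t.map (sgen n)).prod with hy
    have hprod : ((i :: t).map (sgen n)).prod = sgen n i * y := by
      simp [hy]
    have happ : ∀ p : Fin n, ((i :: t).map (sgen n)).prod p = (sgen n i) (y p) := by
      intro p; rw [hprod]; rfl
    have hswap := sgen_eq (n := n) hi1 hiltn
    have hyi : y ⟨i, hiltn⟩ = ⟨i, hiltn⟩ := hfix _ (fun j hj => hit j hj)
    constructor
    · intro k
      rw [happ, hswap]
      rcases eq_or_ne (y k) ⟨i - 1, him1⟩ with hc | hc
      · rw [hc, Equiv.swap_apply_left]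
        have := hPy k
        rw [hc] at this
        simp only at this ⊢
        omega
      · rcases eq_or_ne (y k) ⟨i, hiltn⟩ with hc2 | hc2
        · have hk : k = ⟨i, hiltn⟩ := y.injective (hc2.trans hyi.symm)
          rw [hc2, Equiv.swap_apply_right]
          simp only [hk]
          omega
        · rw [Equiv.swap_apply_of_ne_of_ne hc hc2]
          exact hPy k
    · intro p hall
      have hyp : y p = p := hfix p (fun j hj => hall j (List.mem_cons_of_mem _ hj))
      have hip : i < (p : ℕ) := hall i (List.mem_cons_self)
      rw [happ, hyp, hswap, Equiv.swap_apply_of_ne_of_ne]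
      · exact Fin.ne_of_val_ne (show (p : ℕ) ≠ i - 1 by omega)
      · exact Fin.ne_of_val_ne (show (p : ℕ) ≠ i by omega)

lemma L41 (x : Equiv.Perm (Fin n))
    (h : ∃ l : List ℕ, l.Chain' (· > ·) ∧ (∀ i ∈ l, 1 ≤ i ∧ i ≤ n - 1) ∧
      x = (l.map (sgen n)).prod) : Pcond x := by
  obtain ⟨l, hc, hb, hx⟩ := h
  rw [hx]
  exact (L4Paux l (List.isChain_iff_pairwise.mp hc) hb).1

lemma LP4aux : ∀ (N : ℕ) (x : Equiv.Perm (Fin n)),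
    (Finset.univ.filter fun m => x m ≠ m).card ≤ N → Pcond x →
    ∃ l : List ℕ, l.Chain' (· > ·) ∧ (∀ i ∈ l, 1 ≤ i ∧ i ≤ n - 1) ∧
      x = (l.map (sgen n)).prod ∧ ∀ i ∈ l, ∀ (h : i < n), x ⟨i, h⟩ ≠ ⟨i, h⟩ := by
  intro N
  induction N with
  | zero =>
    intro x hc _
    have hx1 : x = 1 := by
      ext m
      by_contra hm
      have : m ∈ Finset.univ.filter fun m => x m ≠ m := by
        simp only [mem_filter, mem_univ, true_and]
        exact fun h => hm (by rw [h]; rfl)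
      have := Finset.card_pos.mpr ⟨m, this⟩
      omega
    exact ⟨[], List.isChain_nil, by simp, by simp [hx1], by simp⟩
  | succ N ih =>
    intro x hc hP
    by_cases hx1 : x = 1
    · exact ⟨[], List.isChain_nil, by simp, by simp [hx1], by simp⟩
    · set NF := Finset.univ.filter (fun m => x m ≠ m) with hNF
      have hne : NF.Nonempty := by
        by_contra h
        apply hx1
        ext m
        by_contra hm
        apply h
        refine ⟨m, ?_⟩
        simp only [hNF, mem_filter, mem_univ, true_and]
        exact fun h2 => hm (by rw [h2]; rfl)
      set k := NF.max' hne with hk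
      have hkmem : k ∈ NF := NF.max'_mem hne
      have hxk : x k ≠ k := by simpa [hNF] using hkmem
      have hmax : ∀ m, k < m → x m = m := by
        intro m hm
        by_contra h
        have : m ∈ NF := by simp [hNF, h]
        exact absurd (NF.le_max' m this) (not_le.mpr hm)
      have hxklt : (x k : ℕ) < (k : ℕ) := by
        rcases lt_trichotomy ((x k : ℕ)) ((k : ℕ)) with h | h | h
        · exact h
        · exact absurd (Fin.ext h) hxk
        · have := hmax (x k) (Fin.lt_def.mpr h)
          exact absurd (x.injective this) (fun he => hxk (by rw [he]))
      have hPk := hP k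
      set i := (k : ℕ) with hi
      have hi1 : 1 ≤ i := by omega
      have hiltn : i < n := k.isLt
      have him1 : i - 1 < n := by omega
      have hxkval : x k = ⟨i - 1, him1⟩ := Fin.ext (by simp only; omega)
      have hswap := sgen_eq (n := n) hi1 hiltn
      set y : Equiv.Perm (Fin n) := sgen n i * x with hy
      have hkeq : (⟨i, hiltn⟩ : Fin n) = k := Fin.ext rfl
      have happ : ∀ m, y m = Equiv.swap (⟨i - 1, him1⟩ : Fin n) ⟨i, hiltn⟩ (x m) := by
        intro m; rw [hy, hswap]; rfl
      have hyk : y k = k := by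
        rw [happ, hxkval, Equiv.swap_apply_left, hkeq]
      -- nonfixed points of y are nonfixed points of x other than k
      have hNFy : ∀ m, y m ≠ m → (m ≠ k ∧ x m ≠ m) := by
        intro m hm
        have hmk : m ≠ k := fun h => hm (by rw [h, hyk])
        refine ⟨hmk, fun hfx => ?_⟩
        apply hm
        rw [happ, hfx]
        apply Equiv.swap_apply_of_ne_of_ne
        · intro h
          apply hmk
          apply x.injective
          rw [hfx, h, hxkval]
        · intro h
          exact hmk (h.trans hkeq)
      have hcard : (Finset.univ.filter fun m => y m ≠ m).card ≤ N := by
        have hsub : (Finset.univ.filter fun m => y m ≠ m) ⊆ NF.erase k := by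
          intro m hm
          simp only [mem_filter, mem_univ, true_and] at hm
          obtain ⟨h1, h2⟩ := hNFy m hm
          exact Finset.mem_erase.mpr ⟨h1, by simp [hNF, h2]⟩
        have := Finset.card_le_card hsub
        rw [Finset.card_erase_of_mem hkmem] at this
        omega
      have hPy : Pcond y := by
        intro m
        rw [happ]
        rcases eq_or_ne (x m) ⟨i - 1, him1⟩ with hc1 | hc1
        · have hmk : m = k := x.injective (hc1.trans hxkval.symm)
          rw [hc1, Equiv.swap_apply_left]
          simp only [hmk]
          omega
        · rcases eq_or_ne (x m) ⟨i, hiltn⟩ with hc2 | hc2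
          · have hmle : (m : ℕ) ≤ i := by
              by_contra h
              have hfm := hmax m (Fin.lt_def.mpr (by omega))
              rw [hfm] at hc2
              have : (m : ℕ) = i := by rw [hc2]
              omega
            rw [hc2, Equiv.swap_apply_right]
            simp only
            omega
          · rw [Equiv.swap_apply_of_ne_of_ne hc1 hc2]
            exact hP m
      obtain ⟨l, hlc, hlb, hle, hlnf⟩ := ih y hcard hPy
      have hlt : ∀ j ∈ l, j < i := by
        intro j hj
        obtain ⟨hb1, hb2⟩ := hlb j hj
        have hjn : j < n := by omega
        have := hlnf j hj hjn
        obtain ⟨h1, _⟩ := hNFy _ this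
        have : (⟨j, hjn⟩ : Fin n) ∈ NF := by
          simp [hNF]
          exact (hNFy _ (hlnf j hj hjn)).2
        have hle' := NF.le_max' _ this
        rw [← hk] at hle'
        have : j ≤ i := Fin.le_def.mp hle'
        rcases lt_or_eq_of_le this with h | h
        · exact h
        · exact absurd (Fin.ext h : (⟨j, hjn⟩ : Fin n) = k) h1
      refine ⟨i :: l, ?_, ?_, ?_, ?_⟩
      · refine List.isChain_cons.mpr ?_
        exact ⟨fun j hj => hlt j (List.mem_of_mem_head? hj), hlc⟩
      · intro j hj
        rcases List.mem_cons.mp hj with h | h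
        · omega
        · exact hlb j h
      · rw [List.map_cons, List.prod_cons, ← hle, hy, ← mul_assoc, sgen_mul_self, one_mul]
      · intro j hj hjn
        rcases List.mem_cons.mp hj with h | h
        · intro he
          apply hxk
          rwa [show (⟨j, hjn⟩ : Fin n) = k from Fin.ext (show j = (k : ℕ) by omega)] at he
        · exact fun he => (hNFy _ (hlnf j h hjn)).2 he

lemma Lnopat (x : Equiv.Perm (Fin n))
    (h1 : ∀ j : Fin n, (Finset.univ.filter (fun k : Fin n => k ≤ j ∧ j ≤ x k)).card = 1)
    (σ : Equiv.Perm (Fin 3)) (h20 : ((σ 2 : Fin 3) : ℕ) < ((σ 0 : Fin 3) : ℕ))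
    (h21 : ((σ 2 : Fin 3) : ℕ) < ((σ 1 : Fin 3) : ℕ)) :
    ¬ ContainsPattern x σ := by
  rintro ⟨f, hmono, hiff⟩
  have hP := L21 x h1
  have h01 : f 0 < f 1 := hmono (by decide)
  have h12 : f 1 < f 2 := hmono (by decide)
  have hx20 : x (f 2) < x (f 0) := (hiff 2 0).mpr (Fin.lt_def.mpr h20)
  have hx21 : x (f 2) < x (f 1) := (hiff 2 1).mpr (Fin.lt_def.mpr h21)
  have hP2 := hP (f 2)
  have hj : ((f 1 : ℕ)) ≤ (x (f 2) : ℕ) := by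
    have := Fin.lt_def.mp h12; omega
  have hm0 : f 0 ∈ Finset.univ.filter (fun k : Fin n => k ≤ f 1 ∧ f 1 ≤ x k) := by
    simp only [mem_filter, mem_univ, true_and]
    exact ⟨le_of_lt h01, Fin.le_def.mpr (by have := Fin.lt_def.mp hx20; omega)⟩
  have hm1 : f 1 ∈ Finset.univ.filter (fun k : Fin n => k ≤ f 1 ∧ f 1 ≤ x k) := by
    simp only [mem_filter, mem_univ, true_and]
    exact ⟨le_refl _, Fin.le_def.mpr (by have := Fin.lt_def.mp hx21; omega)⟩
  obtain ⟨a, ha⟩ := Finset.card_eq_one.mp (h1 (f 1))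
  rw [ha] at hm0 hm1
  have heq := (Finset.mem_singleton.mp hm0).trans (Finset.mem_singleton.mp hm1).symm
  exact absurd heq (ne_of_lt h01)

end ARAux

/-- Lemma `lem:x1`. For `x ∈ S_n` the following are equivalent:
(1) `x⁻¹(i) ≤ i + 1` for all `i`; (2) `#{k ∈ [j] : x(k) ≥ j} = 1` for all `j`;
(3) `x` avoids both `231` and `321`; (4) `x = s_{i₁} ⋯ s_{i_k}` with
`n - 1 ≥ i₁ > ⋯ > i_k ≥ 1`. (Here `Equiv.swap 0 1 * Equiv.swap 1 2` has one-line
notation `231` and `Equiv.swap 0 2` has one-line notation `321`.) -/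

theorem stmt16 {n : ℕ} (x : Equiv.Perm (Fin n)) :
    [(∀ i : Fin n, (x.symm i).val ≤ i.val + 1),
     (∀ j : Fin n, (Finset.univ.filter (fun k : Fin n => k ≤ j ∧ j ≤ x k)).card = 1),
     (¬ ContainsPattern x (Equiv.swap 0 1 * Equiv.swap 1 2 : Equiv.Perm (Fin 3)) ∧
       ¬ ContainsPattern x (Equiv.swap 0 2 : Equiv.Perm (Fin 3))),
     (∃ l : List ℕ, l.Chain' (· > ·) ∧ (∀ i ∈ l, 1 ≤ i ∧ i ≤ n - 1) ∧
       x = (l.map (sgen n)).prod)].TFAE  := by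
  tfae_have 1 → 2 := fun h1 j => L12 x ((L1 x).mp h1) j
  tfae_have 2 → 1 := fun h2 => (L1 x).mpr (L21 x h2)
  tfae_have 2 → 3 := fun h2 =>
    ⟨Lnopat x h2 _ (by decide) (by decide), Lnopat x h2 _ (by decide) (by decide)⟩
  tfae_have 3 → 1 := by
    intro h3
    refine (L1 x).mpr ?_
    by_contra hP
    rcases LnotP x hP with h | h
    · exact h3.1 h
    · exact h3.2 h
  tfae_have 1 → 4 := by
    intro h1
    obtain ⟨l, hc, hb, he, _⟩ := LP4aux _ x le_rfl ((L1 x).mp h1)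
    exact ⟨l, hc, hb, he⟩
  tfae_have 4 → 1 := fun h4 => (L1 x).mpr (L41 x h4)
  tfae_finish
end

section
/- If x is an AR permutation of [n] and y ≤_B x in the Bruhat order, then y is also an AR permutation. -/
/-- complement count -/
def lowc {n : ℕ} (f : Fin n → Fin n) (p : Fin n) : ℕ :=
  (Finset.univ.filter (fun k : Fin n => k ≤ p ∧ (f k).val < p.val)).card

lemma lowc_add_bcount {n : ℕ} (f : Fin n → Fin n) (p : Fin n) :
    lowc f p + bcount f p p = p.val + 1 := by
  classical
  have h1 : (Finset.univ.filter fun k : Fin n => k ≤ p) = Finset.Iic p := by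
    ext k; simp
  have h2 := Finset.card_filter_add_card_filter_not
    (s := Finset.univ.filter fun k : Fin n => k ≤ p) (p := fun k => (f k).val < p.val)
  rw [Finset.filter_filter, Finset.filter_filter, h1, Fin.card_Iic] at h2
  have h3 : bcount f p p =
      ((Finset.univ.filter fun k : Fin n => k ≤ p ∧ ¬ (f k).val < p.val)).card := by
    unfold bcount
    congr 1
    apply Finset.filter_congr
    intro k _
    rw [not_lt]
    exact and_congr_right fun _ => Fin.le_def
  unfold lowc
  rw [h3]
  omega

lemma lowc_le {n : ℕ} (f : Fin n → Fin n) (hf : Function.Injective f) (p : Fin n) :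
    lowc f p ≤ p.val := by
  have := Finset.card_le_card_of_injOn f
    (s := Finset.univ.filter (fun k : Fin n => k ≤ p ∧ (f k).val < p.val))
    (t := Finset.Iio p)
    (by intro k hk
        simp only [Finset.mem_coe, Finset.mem_filter] at hk
        simp only [Finset.mem_coe, Finset.mem_Iio, Fin.lt_def]
        exact hk.2.2)
    (fun a _ b _ hab => hf hab)
  rwa [Fin.card_Iio] at this

/-- Corollary `cor:arn-bru`. If `x` is an AR permutation and
`y ≤_B x`, then `y` is an AR permutation. -/
theorem stmt17 {n : ℕ} (x y : Equiv.Perm (Fin n)) (hx : IsAR x) (h : BruhatGE x y) :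
    IsAR y := by
  intro i
  by_cases hn : i.val + 1 < n
  · classical
    have hpv : (⟨i.val + 1, hn⟩ : Fin n).val = i.val + 1 := rfl
    -- lower bound for x
    have hlb : i.val + 1 ≤ lowc ⇑x ⟨i.val + 1, hn⟩ := by
      have := Finset.card_le_card_of_injOn (⇑x.symm)
        (s := Finset.Iio ⟨i.val + 1, hn⟩)
        (t := Finset.univ.filter (fun k : Fin n =>
          k ≤ ⟨i.val + 1, hn⟩ ∧ (x k).val < (⟨i.val + 1, hn⟩ : Fin n).val))
        (by intro v hv
            simp only [Finset.mem_coe, Finset.mem_Iio, Fin.lt_def] at hv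
            simp only [Finset.mem_coe, Finset.mem_filter, Finset.mem_univ, true_and]
            refine ⟨?_, ?_⟩
            · have hv2 := hx v
              rw [Fin.le_def]
              omega
            · simpa using hv)
        (fun a _ b _ hab => x.symm.injective hab)
      rw [Fin.card_Iio] at this
      unfold lowc
      omega
    have hy1 : i.val + 1 ≤ lowc ⇑y ⟨i.val + 1, hn⟩ := by
      have hb := h ⟨i.val + 1, hn⟩ ⟨i.val + 1, hn⟩
      have h1 := lowc_add_bcount ⇑x ⟨i.val + 1, hn⟩
      have h2 := lowc_add_bcount ⇑y ⟨i.val + 1, hn⟩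
      omega
    -- surjectivity
    have hsurj := Finset.surj_on_of_inj_on_of_card_le
      (s := Finset.univ.filter (fun k : Fin n =>
        k ≤ ⟨i.val + 1, hn⟩ ∧ (y k).val < (⟨i.val + 1, hn⟩ : Fin n).val))
      (t := Finset.Iio ⟨i.val + 1, hn⟩) (fun k _ => y k)
      (by intro k hk
          simp only [Finset.mem_filter] at hk
          simp only [Finset.mem_Iio, Fin.lt_def]
          exact hk.2.2)
      (fun a b _ _ hab => y.injective hab)
      (by rw [Fin.card_Iio]
          unfold lowc at hy1
          omega)
    have hi : i ∈ Finset.Iio (⟨i.val + 1, hn⟩ : Fin n) := by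
      simp only [Finset.mem_Iio, Fin.lt_def]
      omega
    obtain ⟨k, hk, hki⟩ := hsurj i hi
    simp only [Finset.mem_filter] at hk
    have hyk : y.symm i = k := by rw [hki]; simp
    rw [hyk]
    have hk2 := hk.2.1
    rw [Fin.le_def] at hk2
    omega
  · have := (y.symm i).isLt
    omega
end

section
/- Let x be an AR permutation of [n], let k ∈ [n] be an exceedance of x (i.e., x(k) > k), and set i = x(k). Then x(j) = j − 1 for all j with k + 1 ≤ j ≤ i. -/
/-- Lemma `lem:x2`. If `x` is an AR permutation and `k` is an
exceedance of `x` (`x(k) > k`), then `x(j) = j - 1` for all `k + 1 ≤ j ≤ x(k)`. -/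
theorem stmt18 {n : ℕ} (x : Equiv.Perm (Fin n)) (hx : IsAR x) (k : Fin n)
    (hk : k < x k) :
    ∀ j : Fin n, k < j → j ≤ x k → (x j).val + 1 = j.val := by
  intro j hkj hjx
  -- upper bound: AR at value x j gives j ≤ (x j) + 1
  have hub : j.val ≤ (x j).val + 1 := by
    have := hx (x j)
    simpa using this
  -- lower bound via pigeonhole: (x j).val < j.val
  have hlb : (x j).val < j.val := by
    set T : Finset (Fin n) := insert (x k) (Finset.Iio j) with hT
    set S : Finset (Fin n) := Finset.Iic j with hS
    have hxkT : x k ∉ Finset.Iio j := by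
      simp only [Finset.mem_Iio, not_lt]
      exact hjx
    have hcardT : T.card = j.val + 1 := by
      rw [hT, Finset.card_insert_of_notMem hxkT, Fin.card_Iio]
    have hcardS : S.card = j.val + 1 := by
      rw [hS, Fin.card_Iic]
    have hsub : T.image x.symm ⊆ S := by
      intro p hp
      simp only [Finset.mem_image] at hp
      obtain ⟨w, hw, rfl⟩ := hp
      rw [hT] at hw
      rcases Finset.mem_insert.mp hw with rfl | hw
      · simp only [hS, Finset.mem_Iic, Equiv.symm_apply_apply]
        exact le_of_lt hkj
      · simp only [Finset.mem_Iio] at hw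
        simp only [hS, Finset.mem_Iic]
        have h1 := hx w
        have h2 : w.val < j.val := hw
        exact Fin.le_def.mpr (by omega)
    have hcardim : (T.image x.symm).card = S.card := by
      rw [Finset.card_image_of_injective _ x.symm.injective, hcardT, hcardS]
    have heq : T.image x.symm = S := Finset.eq_of_subset_of_card_le hsub (le_of_eq hcardim.symm)
    have hjS : j ∈ S := by simp [hS]
    rw [← heq] at hjS
    simp only [Finset.mem_image] at hjS
    obtain ⟨w, hw, hwj⟩ := hjS
    have hxj : x j = w := by
      have := congrArg x hwj
      simpa using this.symm
    rw [hT] at hw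
    rcases Finset.mem_insert.mp hw with rfl | hw
    · exact absurd (x.injective hxj) (ne_of_gt hkj).symm.symm
    · rw [hxj]; exact Fin.lt_def.mp (Finset.mem_Iio.mp hw)
  omega
end

section
/- If x, y are permutations of [n] with x ≥_B y in Bruhat order and x is an AR permutation, then x ⊵_R y. -/
lemma stmt19_prefix_card {n m : ℕ} (h : m ≤ n) :
    (Finset.univ.filter fun k : Fin n => k.val < m).card = m := by
  rw [← Finset.card_range m]
  apply Finset.card_bij (fun (k : Fin n) _ => k.val)
  · intro k hk; simp at hk ⊢; exact hk
  · intro k _ k' _ e; exact Fin.val_injective e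
  · intro v hv; simp at hv
    exact ⟨⟨v, lt_of_lt_of_le hv h⟩, by simp [hv], rfl⟩

lemma stmt19_split_count {n : ℕ} (f : Fin n → Fin n) (i₁ t : Fin n) :
    (Finset.univ.filter fun k : Fin n => k ≤ i₁ ∧ t ≤ f k).card
      + (Finset.univ.filter fun k : Fin n => k ≤ i₁ ∧ f k < t).card
      = (Finset.univ.filter fun k : Fin n => k ≤ i₁).card := by
  rw [← Finset.filter_filter, ← Finset.filter_filter]
  have h2 : (Finset.univ.filter (fun k : Fin n => k ≤ i₁)).filter (fun k => f k < t)
      = (Finset.univ.filter (fun k : Fin n => k ≤ i₁)).filter (fun k => ¬ t ≤ f k) := by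
    apply Finset.filter_congr; intro k _; simp [not_le]
  rw [h2]
  exact Finset.card_filter_add_card_filter_not _

lemma stmt19_key {n : ℕ} (x y : Equiv.Perm (Fin n)) (hB : BruhatGE x y) (hx : IsAR x)
    (i t : Fin n) (h1 : y i < t) (h2 : t ≤ x i) : i < y.symm t := by
  by_contra hcon
  push_neg at hcon
  set j := y.symm t with hj
  have hyj : y j = t := y.apply_symm_apply t
  have hji : j < i := by
    rcases lt_or_eq_of_le hcon with h | h
    · exact h
    · rw [h] at hyj; exact absurd hyj (ne_of_lt h1)
  have hi1 : 1 ≤ i.val := by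
    have := Fin.lt_def.mp hji; omega
  let i₁ : Fin n := ⟨i.val - 1, by omega⟩
  have hBr := hB i₁ t
  have hsplit : ∀ k : Fin n, k ≤ i₁ ↔ k.val < i.val := by
    intro k; rw [Fin.le_def]; simp only [i₁]; omega
  have hpref : (Finset.univ.filter fun k : Fin n => k ≤ i₁).card = i.val := by
    have : (Finset.univ.filter fun k : Fin n => k ≤ i₁)
        = (Finset.univ.filter fun k : Fin n => k.val < i.val) := by
      apply Finset.filter_congr; intro k _; simp [hsplit k]
    rw [this]; exact stmt19_prefix_card (le_of_lt i.isLt)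
  have hBpos : 0 < bcount ⇑y i₁ t := by
    rw [bcount, Finset.card_pos]
    exact ⟨j, Finset.mem_filter.2 ⟨Finset.mem_univ j,
      (hsplit j).2 (Fin.lt_def.mp hji), le_of_eq hyj.symm⟩⟩
  rcases le_or_gt t.val i.val with hti | hti
  · -- case t ≤ i
    have ht1 : 1 ≤ t.val := by have := Fin.lt_def.mp h1; omega
    have hC : t.val ≤ (Finset.univ.filter fun k : Fin n => k ≤ i₁ ∧ x k < t).card := by
      rw [← stmt19_prefix_card (m := t.val) (le_of_lt t.isLt)]
      apply Finset.card_le_card_of_injOn (fun v => x.symm v)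
      · intro v hv
        simp only [Finset.mem_coe, Finset.mem_filter, Finset.mem_univ, true_and] at hv ⊢
        have har := hx v
        have hne : x.symm v ≠ i := by
          intro e
          have : x i = v := by rw [← e]; exact x.apply_symm_apply v
          rw [Fin.le_def] at h2; omega
        have hne' : (x.symm v).val ≠ i.val := fun e => hne (Fin.val_injective e)
        constructor
        · rw [hsplit]; omega
        · rw [Fin.lt_def]; rwa [x.apply_symm_apply]
      · intro a _ b _ e; exact x.symm.injective e
    have hAC := stmt19_split_count (⇑x) i₁ t
    rw [hpref] at hAC
    have hT : (Finset.univ.filter fun k : Fin n => k ≤ i₁ ∧ y k < t).card ≤ t.val - 1 := by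
      have hmem : y i ∈ Finset.univ.filter fun v : Fin n => v.val < t.val :=
        Finset.mem_filter.2 ⟨Finset.mem_univ _, Fin.lt_def.mp h1⟩
      have hcarde : ((Finset.univ.filter fun v : Fin n => v.val < t.val).erase (y i)).card
          = t.val - 1 := by
        rw [Finset.card_erase_of_mem hmem, stmt19_prefix_card (le_of_lt t.isLt)]
      rw [← hcarde]
      apply Finset.card_le_card_of_injOn (fun k => y k)
      · intro k hk
        simp only [Finset.mem_coe, Finset.mem_filter, Finset.mem_univ, true_and] at hk
        apply Finset.mem_erase.2
        refine ⟨?_, Finset.mem_filter.2 ⟨Finset.mem_univ _, Fin.lt_def.mp hk.2⟩⟩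
        intro e
        have : k = i := y.injective e
        rw [this, hsplit] at hk; omega
      · intro a _ b _ e; exact y.injective e
    have hBT := stmt19_split_count (⇑y) i₁ t
    rw [hpref] at hBT
    have eA : bcount ⇑x i₁ t
        = (Finset.univ.filter fun k : Fin n => k ≤ i₁ ∧ t ≤ ⇑x k).card := rfl
    have eB : bcount ⇑y i₁ t
        = (Finset.univ.filter fun k : Fin n => k ≤ i₁ ∧ t ≤ ⇑y k).card := rfl
    rw [eA, eB] at hBr
    rw [eB] at hBpos
    omega
  · -- case t > i : A = 0
    have hA : bcount ⇑x i₁ t = 0 := by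
      rw [bcount, Finset.card_eq_zero, Finset.filter_eq_empty_iff]
      rintro k - ⟨hk1, hk2⟩
      rw [hsplit] at hk1
      have hxit : i.val < (x i).val := lt_of_lt_of_le hti (Fin.le_def.mp h2)
      set S := Finset.univ.filter (fun k : Fin n => k.val < i.val) with hS
      have hmap : ∀ v ∈ S, x.symm v ∈ S := by
        intro v hv
        simp only [hS, Finset.mem_filter, Finset.mem_univ, true_and] at hv ⊢
        have har := hx v
        have hne : x.symm v ≠ i := by
          intro e
          have : x i = v := by rw [← e]; exact x.apply_symm_apply v
          omega
        have hne' : (x.symm v).val ≠ i.val := fun e => hne (Fin.val_injective e)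
        omega
      have himg : S.image (fun v => x.symm v) = S := by
        apply Finset.eq_of_subset_of_card_le
        · intro k hk
          rcases Finset.mem_image.1 hk with ⟨v, hv, rfl⟩
          exact hmap v hv
        · rw [Finset.card_image_of_injOn (fun a _ b _ e => x.symm.injective e)]
      have hkS : k ∈ S := Finset.mem_filter.2 ⟨Finset.mem_univ _, hk1⟩
      rw [← himg] at hkS
      rcases Finset.mem_image.1 hkS with ⟨v, hv, hvk⟩
      simp only [hS, Finset.mem_filter, Finset.mem_univ, true_and] at hv
      have hxk : x k = v := by rw [← hvk, x.apply_symm_apply]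
      have h3 : (x k).val = v.val := by rw [hxk]
      have h4 := Fin.le_def.mp hk2
      omega
    omega

theorem stmt19 {n : ℕ} (x y : Equiv.Perm (Fin n)) (hB : BruhatGE x y) (hx : IsAR x) :
    Reaches ⇑x ⇑y := by
  refine ⟨⇑x, fun i => max (x i) (y i), ⟨⇑x, x.injective, ?_⟩, ⟨x.injective, ?_⟩,
    ?_, ?_⟩
  · intro i
    exact ⟨le_refl _, le_max_left _ _, fun s hs1 hs2 => absurd (lt_of_le_of_lt hs1 hs2)
      (lt_irrefl _)⟩
  · intro i
    exact ⟨le_refl _, fun s hs1 hs2 => absurd (lt_of_le_of_lt hs1 hs2) (lt_irrefl _)⟩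
  · intro u v h
    simp only [pconj] at h
    have := y.injective (Fin.rev_injective h)
    exact Fin.rev_injective this
  · intro i
    constructor
    · exact Fin.rev_le_rev.mpr (le_max_right _ _)
    · intro s hs1 hs2
      set i' := i.rev with hi'
      set t := s.rev with ht
      have h1 : y i' < t := by
        have : s.rev.rev < (y i').rev := by rw [Fin.rev_rev]; exact hs2
        exact Fin.rev_lt_rev.mp this
      have h2 : t ≤ max (x i') (y i') := by
        have : (max (x i') (y i')).rev ≤ s.rev.rev := by rw [Fin.rev_rev]; exact hs1
        exact Fin.rev_le_rev.mp this
      have h2' : t ≤ x i' := by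
        rcases le_max_iff.mp h2 with h | h
        · exact h
        · exact absurd h (not_le.mpr h1)
      have hk := stmt19_key x y hB hx i' t h1 h2'
      refine ⟨(y.symm t).rev, ?_, ?_⟩
      · have : (y.symm t).rev < i'.rev := Fin.rev_lt_rev.mpr hk
        rwa [hi', Fin.rev_rev] at this
      · show (y (y.symm t).rev.rev).rev = s
        rw [Fin.rev_rev, y.apply_symm_apply, ht, Fin.rev_rev]
end
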